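/- arXiv:0907.4294 — 8 statements merged into one kernel-verified Lean document; each statement's English description precedes it below -/
import Mathlib

section
/- For every α > 0, define e_α : ℝ → ℝ by e_α(t) = tanh(α)·(1 − t·tanh(t)) + (1 − α·tanh(α))·tanh(t). Then e_α(−α) = 0, e_α has exactly one zero β(α) in (0, ∞), and e_α has no zero in ℝ other than −α and β(α). -/
private lemma tanh_rep (x : ℝ) :
    Real.tanh x = 1 - 2 / (Real.exp (2 * x) + 1) := by
  have h1 : Real.exp x ≠ 0 := (Real.exp_pos x).ne'
  have h2 : 0 < Real.exp (2 * x) + 1 := by positivity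
  rw [Real.tanh_eq_sinh_div_cosh, Real.sinh_eq, Real.cosh_eq]
  have hc : Real.exp x + Real.exp (-x) ≠ 0 := by positivity
  have h2x : Real.exp (2 * x) = Real.exp x * Real.exp x := by
    rw [two_mul, Real.exp_add]
  rw [Real.exp_neg] at hc ⊢
  rw [h2x]
  field_simp
  ring

private lemma tanh_lt_one' (x : ℝ) : Real.tanh x < 1 := by
  rw [tanh_rep]
  have h2 : 0 < Real.exp (2 * x) + 1 := by positivity
  have : 0 < 2 / (Real.exp (2 * x) + 1) := by positivity
  linarith

private lemma tanh_mono {x y : ℝ} (h : x ≤ y) : Real.tanh x ≤ Real.tanh y := by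
  rw [tanh_rep, tanh_rep]
  have hx : 0 < Real.exp (2 * x) + 1 := by positivity
  have hy : 0 < Real.exp (2 * y) + 1 := by positivity
  have hle : Real.exp (2 * x) ≤ Real.exp (2 * y) := Real.exp_le_exp.2 (by linarith)
  have h2 : 2 / (Real.exp (2 * y) + 1) ≤ 2 / (Real.exp (2 * x) + 1) := by
    gcongr
    try linarith
  linarith

private lemma tanh_pos' {x : ℝ} (hx : 0 < x) : 0 < Real.tanh x := by
  rw [Real.tanh_eq_sinh_div_cosh]
  exact div_pos (Real.sinh_pos_iff.2 hx) (Real.cosh_pos x)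

/-- For `α > 0`, the Jacobi field `e_α(t) = tanh(α)(1 − t tanh t) + (1 − α tanh α) tanh t`
vanishes at `−α`, has exactly one zero `β(α)` in `(0,∞)`, and no other zeros. -/
theorem stmt2 (α : ℝ) (hα : 0 < α) (eα : ℝ → ℝ)
    (heα : ∀ t, eα t =
      Real.tanh α * (1 - t * Real.tanh t) + (1 - α * Real.tanh α) * Real.tanh t) :
    eα (-α) = 0 ∧
    ∃ β : ℝ, 0 < β ∧ eα β = 0 ∧ (∀ t, 0 < t → eα t = 0 → t = β) ∧
      (∀ t, eα t = 0 → t = -α ∨ t = β) := by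
  set a : ℝ := Real.tanh α with ha_def
  set b : ℝ := 1 - α * Real.tanh α with hb_def
  have ha : 0 < a := tanh_pos' hα
  -- the auxiliary function f t = cosh t * eα t
  set f : ℝ → ℝ := fun t => a * (Real.cosh t - t * Real.sinh t) + b * Real.sinh t with hf_def
  have hfe : ∀ t, f t = Real.cosh t * eα t := by
    intro t
    have hc : Real.cosh t ≠ 0 := (Real.cosh_pos t).ne'
    rw [heα, Real.tanh_eq_sinh_div_cosh]
    simp only [hf_def]
    field_simp
  have hzero : ∀ t, eα t = 0 ↔ f t = 0 := by
    intro t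
    rw [hfe t]
    constructor
    · intro h; rw [h, mul_zero]
    · intro h
      rcases mul_eq_zero.1 h with h | h
      · exact absurd h (Real.cosh_pos t).ne'
      · exact h
  -- derivative of f
  have hderiv : ∀ t, HasDerivAt f (Real.cosh t * (b - a * t)) t := by
    intro t
    have h1 := Real.hasDerivAt_cosh t
    have h2 := Real.hasDerivAt_sinh t
    have h3 : HasDerivAt (fun t : ℝ => t * Real.sinh t)
        (1 * Real.sinh t + t * Real.cosh t) t := (hasDerivAt_id t).mul h2
    have h4 := ((h1.sub h3).const_mul a).add (h2.const_mul b)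
    refine h4.congr_deriv ?_
    ring
  have hcont : Continuous f := by
    have : Differentiable ℝ f := fun t => (hderiv t).differentiableAt
    exact this.continuous
  set t₀ : ℝ := b / a with ht₀_def
  have hmono : StrictMonoOn f (Set.Iic t₀) := by
    apply strictMonoOn_of_deriv_pos (convex_Iic t₀) hcont.continuousOn
    intro x hx
    rw [interior_Iic, Set.mem_Iio] at hx
    rw [(hderiv x).deriv]
    have : a * x < b := by
      have := (lt_div_iff₀ ha).1 hx
      linarith
    have : 0 < b - a * x := by linarith
    exact mul_pos (Real.cosh_pos x) this
  have hanti : StrictAntiOn f (Set.Ici t₀) := by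
    apply strictAntiOn_of_deriv_neg (convex_Ici t₀) hcont.continuousOn
    intro x hx
    rw [interior_Ici, Set.mem_Ioi] at hx
    rw [(hderiv x).deriv]
    have : b < a * x := by
      have := (div_lt_iff₀ ha).1 hx
      linarith
    have hneg : b - a * x < 0 := by linarith
    exact mul_neg_of_pos_of_neg (Real.cosh_pos x) hneg
  -- eα(-α) = 0
  have hroot : eα (-α) = 0 := by
    rw [heα, Real.tanh_neg]; ring
  have hfroot : f (-α) = 0 := (hzero (-α)).1 hroot
  -- -α < t₀
  have hαt₀ : -α < t₀ := by
    rw [ht₀_def, lt_div_iff₀ ha]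
    have h1 : a < 1 := tanh_lt_one' α
    simp only [hb_def, ha_def]
    nlinarith
  have hft₀ : 0 < f t₀ := by
    have := hmono (Set.mem_Iic.2 hαt₀.le) (Set.mem_Iic.2 le_rfl) hαt₀
    linarith [hfroot ▸ this]
  -- f 0 = a > 0
  have hf0 : f 0 = a := by simp [hf_def]
  -- a point where eα is negative
  have hth1 : 0 < Real.tanh 1 := tanh_pos' one_pos
  set T : ℝ := max (t₀ + 1) (max 1 ((1 + a + |b|) / (a * Real.tanh 1))) with hT_def
  have hT1 : 1 ≤ T := le_trans (le_max_left _ _) (le_max_right _ _)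
  have hTM : (1 + a + |b|) / (a * Real.tanh 1) ≤ T :=
    le_trans (le_max_right _ _) (le_max_right _ _)
  have hTt₀ : t₀ < T := lt_of_lt_of_le (by linarith) (le_max_left _ _)
  have heαT : eα T < 0 := by
    have h1 : 1 + a + |b| ≤ T * (a * Real.tanh 1) := by
      rwa [div_le_iff₀ (by positivity)] at hTM
    have hthT : Real.tanh 1 ≤ Real.tanh T := tanh_mono hT1
    have hthT1 : Real.tanh T < 1 := tanh_lt_one' T
    have hbabs : b ≤ |b| := le_abs_self b
    have hbabs' : -|b| ≤ b := neg_abs_le b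
    have hbaT : b - a * T < 0 := by nlinarith
    have key : Real.tanh T * (b - a * T) ≤ Real.tanh 1 * (b - a * T) :=
      mul_le_mul_of_nonpos_right hthT hbaT.le
    have hb1 : Real.tanh 1 * b ≤ |b| := by
      calc Real.tanh 1 * b ≤ Real.tanh 1 * |b| :=
            mul_le_mul_of_nonneg_left hbabs hth1.le
        _ ≤ 1 * |b| := mul_le_mul_of_nonneg_right (tanh_lt_one' 1).le (abs_nonneg b)
        _ = |b| := one_mul _
    rw [heα]
    have : Real.tanh α * (1 - T * Real.tanh T) + (1 - α * Real.tanh α) * Real.tanh T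
        = a + Real.tanh T * (b - a * T) := by
      simp only [ha_def, hb_def]; ring
    rw [this]
    nlinarith
  have hfT : f T < 0 := by
    rw [hfe T]
    exact mul_neg_of_pos_of_neg (Real.cosh_pos T) heαT
  -- existence of β by IVT on [t₀, T]
  obtain ⟨β, hβmem, hβf⟩ : ∃ β ∈ Set.Icc t₀ T, f β = 0 := by
    have := intermediate_value_Icc' hTt₀.le hcont.continuousOn
      (Set.mem_Icc.2 ⟨hfT.le, hft₀.le⟩)
    obtain ⟨β, hβ, hβf⟩ := this
    exact ⟨β, hβ, hβf⟩
  have hβt₀ : t₀ < β := by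
    rcases lt_or_eq_of_le hβmem.1 with h | h
    · exact h
    · exact absurd (h ▸ hβf) hft₀.ne'
  have hβpos : 0 < β := by
    by_contra h
    push_neg at h
    rcases lt_or_eq_of_le h with h' | h'
    · have := hanti (Set.mem_Ici.2 hβt₀.le) (Set.mem_Ici.2 (by linarith : t₀ ≤ (0:ℝ))) h'
      rw [hβf, hf0] at this
      linarith
    · rw [h', hf0] at hβf
      exact ha.ne' hβf
  -- uniqueness
  have huniq : ∀ t, f t = 0 → t = -α ∨ t = β := by
    intro t ht
    rcases le_or_gt t t₀ with h | h
    · left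
      exact hmono.injOn (Set.mem_Iic.2 h) (Set.mem_Iic.2 hαt₀.le) (by rw [ht, hfroot])
    · right
      exact hanti.injOn (Set.mem_Ici.2 h.le) (Set.mem_Ici.2 hβt₀.le) (by rw [ht, hβf])
  refine ⟨hroot, β, hβpos, (hzero β).2 hβf, ?_, ?_⟩
  · intro t htpos ht
    rcases huniq t ((hzero t).1 ht) with h | h
    · exfalso; rw [h] at htpos; linarith
    · exact h
  · intro t ht
    exact huniq t ((hzero t).1 ht)
end

section
/- Let n ≥ 3, T_n = ∫₁^∞ (u^{2n−2} − 1)^{−1/2} du (a finite number), c = c_n the maximal solution of c·c'' = (n−1)(1 + c'²), c(0) = 1, c'(0) = 0, v(t) = c'(t)(1 + c'(t)²)^{−1/2}, e(t) = −c(t)^{2−n} + t·v(t), and let z be the unique zero of e in (0, T_n). Then: (1) the function y(t) = e(t) + T_n·v(t) has exactly one zero ℓ in (0, T_n), and ℓ ∈ (0, z); (2) for every α with 0 < α ≤ ℓ, the function w_α(t) = v(α)·e(t) + e(α)·v(t) has no zero in the open interval (0, T_n); (3) for every α with ℓ < α < T_n, w_α has exactly one zero β(α) in (0, T_n). -/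
set_option maxHeartbeats 1000000


open Real MeasureTheory Set Filter Topology

/-- For `n ≥ 3` the `n`-catenoid in `ℝ^{n+1}` does not satisfy Lindelöf's property:
`y = e + T_n·v` has a unique zero `ℓ ∈ (0, z)`; for `0 < α ≤ ℓ` the Jacobi field
`w_α = v(α)e + e(α)v` has no zero in `(0, T_n)`, and for `ℓ < α < T_n` it has exactly one. -/
theorem stmt8 (n : ℕ) (hn : 3 ≤ n)
    (T : ℝ) (hT : T = ∫ u in Set.Ioi (1:ℝ), (u ^ (2*n-2) - 1) ^ (-(1:ℝ)/2))
    (c : ℝ → ℝ)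
    (hc : ContDiffOn ℝ (⊤ : ℕ∞) c (Set.Ioo (-T) T))
    (hceven : ∀ t ∈ Set.Ioo (-T) T, c (-t) = c t)
    (hc0 : c 0 = 1) (hc0' : deriv c 0 = 0)
    (hode : ∀ t ∈ Set.Ioo (-T) T,
      c t * deriv (deriv c) t = (n - 1 : ℝ) * (1 + (deriv c t) ^ 2))
    (v e : ℝ → ℝ)
    (hv : ∀ t, v t = deriv c t / Real.sqrt (1 + (deriv c t) ^ 2))
    (he : ∀ t, e t = -(c t ^ ((2:ℤ) - n)) + t * v t)
    (z : ℝ) (hz : z ∈ Set.Ioo 0 T) (hze : e z = 0)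
    (hzuniq : ∀ t ∈ Set.Ioo 0 T, e t = 0 → t = z) :
    ∃ ℓ ∈ Set.Ioo 0 T,
      ℓ < z ∧
      e ℓ + T * v ℓ = 0 ∧
      (∀ t ∈ Set.Ioo 0 T, e t + T * v t = 0 → t = ℓ) ∧
      (∀ α : ℝ, 0 < α → α ≤ ℓ → ∀ t ∈ Set.Ioo 0 T, v α * e t + e α * v t ≠ 0) ∧
      (∀ α : ℝ, ℓ < α → α < T → ∃ β ∈ Set.Ioo 0 T,
        v α * e β + e α * v β = 0 ∧
        ∀ t ∈ Set.Ioo 0 T, v α * e t + e α * v t = 0 → t = β) := by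
  have hTpos : 0 < T := lt_trans hz.1 hz.2
  set I : Set ℝ := Set.Ioo (-T) T with hI
  have hIopen : IsOpen I := isOpen_Ioo
  set c1 : ℝ → ℝ := deriv c with hc1def
  set c2 : ℝ → ℝ := deriv c1 with hc2def
  have hc1cd : ContDiffOn ℝ (⊤:ℕ∞) c1 I := hc.deriv_of_isOpen hIopen (by simp)
  have hdc : ∀ t ∈ I, HasDerivAt c (c1 t) t := fun t ht =>
    ((hc.differentiableOn (by simp)).differentiableAt (hIopen.mem_nhds ht)).hasDerivAt
  have hdc1 : ∀ t ∈ I, HasDerivAt c1 (c2 t) t := fun t ht =>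
    ((hc1cd.differentiableOn (by simp)).differentiableAt (hIopen.mem_nhds ht)).hasDerivAt
  have hcc : ContinuousOn c I := hc.continuousOn
  have hcc1 : ContinuousOn c1 I := hc1cd.continuousOn
  -- F-derivative lemma
  have hFd : ∀ x ∈ I, c x ≠ 0 →
      HasDerivAt (fun t => (1 + (c1 t)^2) / (c t)^(2*n-2)) 0 x := by
    intro x hx hcx
    have h1 : HasDerivAt (fun t => 1 + (c1 t)^2) (2 * c1 x * c2 x) x := by
      simpa [mul_comm, mul_assoc, mul_left_comm] using ((hdc1 x hx).pow 2).const_add 1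
    have h2 : HasDerivAt (fun t => (c t)^(2*n-2))
        ((2*n-2 : ℕ) * (c x)^(2*n-2-1) * c1 x) x := (hdc x hx).pow _
    have h3 := h1.div h2 (pow_ne_zero _ hcx)
    have hsplit : (c x)^(2*n-2) = (c x)^(2*n-2-1) * c x := by
      rw [← pow_succ]; congr 1; omega
    have hcast : ((2*n-2 : ℕ) : ℝ) = 2 * ((n:ℝ) - 1) := by
      have : (3:ℕ) ≤ n := hn
      push_cast [Nat.cast_sub (by omega : 2 ≤ 2*n)]
      ring
    have h3' : HasDerivAt (fun t => (1 + (c1 t)^2) / (c t)^(2*n-2)) _ x := h3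
    convert h3' using 1
    rw [eq_div_iff (by positivity), hcast, hsplit]
    linear_combination (-(2 * c1 x * (c x)^(2*n-2-1))) * (hode x hx)
  have hsub : ∀ {b : ℝ}, 0 ≤ b → b < T → Icc 0 b ⊆ I := by
    intro b hb0 hbT x hx
    exact ⟨lt_of_lt_of_le (neg_lt_zero.mpr hTpos) hx.1, lt_of_le_of_lt hx.2 hbT⟩
  have hconst : ∀ u, 0 ≤ u → u < T → (∀ s ∈ Icc 0 u, c s ≠ 0) →
      ∀ x ∈ Icc 0 u, (1 + (c1 x)^2) / (c x)^(2*n-2) = 1 := by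
    intro u hu0 huT hne x hx
    have hsub' : Icc 0 u ⊆ I := hsub hu0 huT
    have hFc : ContinuousOn (fun t => (1 + (c1 t)^2) / (c t)^(2*n-2)) (Icc 0 u) := by
      refine ContinuousOn.div ?_ ?_ ?_
      · exact (continuousOn_const.add ((hcc1.mono hsub').pow 2))
      · exact (hcc.mono hsub').pow _
      · exact fun s hs => pow_ne_zero _ (hne s hs)
    have := constant_of_has_deriv_right_zero (f := fun t => (1 + (c1 t)^2) / (c t)^(2*n-2)) hFc
      (fun s hs => ((hFd s (hsub' (Ico_subset_Icc_self hs)) (hne s (Ico_subset_Icc_self hs))).hasDerivWithinAt))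
    have h0 := this x hx
    change (1 + (c1 x)^2) / (c x)^(2*n-2) = (1 + (c1 0)^2) / (c 0)^(2*n-2) at h0
    rw [h0, hc0, show c1 0 = 0 from hc0']
    norm_num
  have key : ∀ b, 0 ≤ b → b < T → ∀ x ∈ Icc 0 b,
      (1 ≤ c x ∧ (c1 x)^2 = (c x)^(2*n-2) - 1) := by
    intro b hb0 hbT
    have hgt : ∀ s ∈ Icc 0 b, (1:ℝ)/2 < c s := by
      by_contra hS
      push_neg at hS
      obtain ⟨s0, hs0, hcs0⟩ := hS
      have hccb : ContinuousOn c (Icc 0 b) := hcc.mono (hsub hb0 hbT)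
      have hIVT : ∀ s, s ∈ Icc 0 b → c s ≤ 1/2 → ∃ y ∈ Icc 0 s, c y = 1/2 := by
        intro s hs hcs
        have hcont' : ContinuousOn c (Icc 0 s) :=
          hccb.mono (Icc_subset_Icc le_rfl hs.2)
        have := intermediate_value_Icc' hs.1 hcont'
        have hmem : (1/2 : ℝ) ∈ Icc (c s) (c 0) := by
          rw [hc0]; exact ⟨hcs, by norm_num⟩
        obtain ⟨y, hy, hcy⟩ := this hmem
        exact ⟨y, hy, hcy⟩
      set S := Icc 0 b ∩ c ⁻¹' {1/2} with hSdef
      have hScl : IsClosed S :=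
        hccb.preimage_isClosed_of_isClosed isClosed_Icc isClosed_singleton
      have hSne : S.Nonempty := by
        obtain ⟨y, hy, hcy⟩ := hIVT s0 hs0 hcs0
        exact ⟨y, ⟨⟨hy.1, le_trans hy.2 hs0.2⟩, by simp [hcy]⟩⟩
      have hbdd : BddBelow S := ⟨0, fun s hs => hs.1.1⟩
      set u := sInf S with hudef
      have huS : u ∈ S := hScl.csInf_mem hSne hbdd
      have hcu : c u = 1/2 := huS.2
      have hu0 : (0:ℝ) ≤ u := huS.1.1
      have huT : u < T := lt_of_le_of_lt huS.1.2 hbT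
      have hgt' : ∀ s, 0 ≤ s → s < u → 1/2 < c s := by
        intro s hs0' hsu
        by_contra hle
        push_neg at hle
        have hsb : s ∈ Icc 0 b := ⟨hs0', le_trans (le_of_lt hsu) huS.1.2⟩
        obtain ⟨y, hy, hcy⟩ := hIVT s hsb hle
        have hyS : y ∈ S := ⟨⟨hy.1, le_trans hy.2 hsb.2⟩, by simp [hcy]⟩
        have := csInf_le hbdd hyS
        have : u ≤ s := le_trans this hy.2
        linarith
      have hne1 : ∀ s ∈ Icc 0 u, c s ≠ 0 := by
        intro s hs
        rcases eq_or_lt_of_le hs.2 with h | h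
        · rw [h, hcu]; norm_num
        · exact ne_of_gt (lt_trans (by norm_num) (hgt' s hs.1 h))
      have hF := hconst u hu0 huT hne1 u ⟨hu0, le_rfl⟩
      rw [hcu] at hF
      have hlt1 : ((1:ℝ)/2)^(2*n-2) < 1 := pow_lt_one₀ (by norm_num) (by norm_num) (by omega)
      have hge1 : (1:ℝ) ≤ ((1:ℝ)/2)^(2*n-2) := by
        rw [div_eq_one_iff_eq (by positivity)] at hF
        nlinarith [sq_nonneg (c1 u)]
      linarith
    have hne : ∀ s ∈ Icc 0 b, c s ≠ 0 := fun s hs => ne_of_gt (lt_trans (by norm_num) (hgt s hs))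
    intro x hx
    have hF := hconst b hb0 hbT hne x hx
    have hcx : (0:ℝ) < c x := lt_trans (by norm_num) (hgt x hx)
    have hpow : (c x)^(2*n-2) = 1 + (c1 x)^2 := by
      rw [div_eq_one_iff_eq (by positivity)] at hF
      linarith [hF]
    constructor
    · have h1 : (1:ℝ) ≤ (c x)^(2*n-2) := by rw [hpow]; nlinarith [sq_nonneg (c1 x)]
      by_contra hlt
      push_neg at hlt
      have : (c x)^(2*n-2) < 1 := by
        calc (c x)^(2*n-2) < 1^(2*n-2) := by
              apply pow_lt_pow_left₀ hlt (le_of_lt hcx) (by omega)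
        _ = 1 := one_pow _
      linarith
    · rw [hpow]; ring
  have hn' : (3:ℝ) ≤ (n:ℝ) := by exact_mod_cast hn
  have hcpos : ∀ x, 0 ≤ x → x < T → 1 ≤ c x := fun x h0 hT' =>
    (key x h0 hT' x ⟨h0, le_rfl⟩).1
  have hfi : ∀ x, 0 ≤ x → x < T → (c1 x)^2 = (c x)^(2*n-2) - 1 := fun x h0 hT' =>
    (key x h0 hT' x ⟨h0, le_rfl⟩).2
  have hmemI : ∀ x, 0 ≤ x → x < T → x ∈ I := fun x h0 hT' =>
    ⟨lt_of_lt_of_le (neg_lt_zero.mpr hTpos) h0, hT'⟩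
  have hc2pos : ∀ x, 0 ≤ x → x < T → 0 < c2 x := by
    intro x h0 hT'
    have hode' := hode x (hmemI x h0 hT')
    nlinarith [hcpos x h0 hT', sq_nonneg (c1 x)]
  have hc1pos : ∀ x, 0 < x → x < T → 0 < c1 x := by
    intro x hx0 hxT
    have hmono : StrictMonoOn c1 (Icc 0 x) := by
      apply strictMonoOn_of_deriv_pos (convex_Icc 0 x)
      · exact hcc1.mono (hsub (le_of_lt hx0) hxT)
      · intro s hs
        rw [interior_Icc] at hs
        have h2 := hc2pos s (le_of_lt hs.1) (lt_trans hs.2 hxT)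
        rw [← hc2def]
        exact h2
    have := hmono (left_mem_Icc.mpr (le_of_lt hx0)) (right_mem_Icc.mpr (le_of_lt hx0)) hx0
    rw [hc0'] at this
    exact this
  have hcmono : StrictMonoOn c (Ico 0 T) := by
    apply strictMonoOn_of_deriv_pos (convex_Ico 0 T)
    · exact hcc.mono (fun s hs => hmemI s hs.1 hs.2)
    · intro s hs
      rw [interior_Ico] at hs
      rw [← hc1def]
      exact hc1pos s hs.1 hs.2
  have hcgt1 : ∀ x, 0 < x → x < T → 1 < c x := by
    intro x h1 h2
    have := hcmono (left_mem_Ico.mpr hTpos) ⟨le_of_lt h1, h2⟩ h1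
    rw [hc0] at this
    exact this
  have hq : ∀ x, 0 ≤ x → x < T → Real.sqrt (1 + (c1 x)^2) = (c x)^(n-1) := by
    intro x h0 hT'
    have hsq : 1 + (c1 x)^2 = ((c x)^(n-1))^2 := by
      rw [← pow_mul]
      have hfix := hfi x h0 hT'
      have hexp : (n-1)*2 = 2*n-2 := by omega
      rw [hexp]
      linarith
    rw [hsq, Real.sqrt_sq (pow_nonneg (le_trans zero_le_one (hcpos x h0 hT')) _)]
  set g : ℝ → ℝ := fun t => t - c t / c1 t with hgdef
  have hvpos : ∀ x, 0 < x → x < T → 0 < v x := by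
    intro x h1 h2
    rw [hv x]
    exact div_pos (hc1pos x h1 h2) (Real.sqrt_pos.mpr (by positivity))
  have hveq : ∀ x, 0 ≤ x → x < T → v x = c1 x / (c x)^(n-1) := by
    intro x h0 hT'
    rw [hv x, hq x h0 hT']
  have heg : ∀ x, 0 < x → x < T → e x = v x * g x := by
    intro x h1 h2
    have hc1x := hc1pos x h1 h2
    have hcx : (0:ℝ) < c x := lt_trans zero_lt_one (hcgt1 x h1 h2)
    have hzp : (c x)^((2:ℤ)-n) = c x / (c x)^(n-1) := by
      rw [eq_div_iff (pow_ne_zero _ (ne_of_gt hcx)), ← zpow_natCast (c x) (n-1),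
        ← zpow_add₀ (ne_of_gt hcx)]
      rw [show ((2:ℤ)-n) + ((n-1:ℕ):ℤ) = 1 by
        push_cast [Nat.cast_sub (by omega : 1 ≤ n)]; ring]
      exact zpow_one _
    rw [he x, hveq x (le_of_lt h1) h2, hzp, hgdef]
    field_simp
    ring
  have hgd : ∀ s, 0 < s → s < T → HasDerivAt g (1 - ((c1 s * c1 s - c s * c2 s)/(c1 s)^2)) s := by
    intro s h1 h2
    have hms := hmemI s (le_of_lt h1) h2
    exact (hasDerivAt_id s).sub (((hdc s hms).div (hdc1 s hms) (ne_of_gt (hc1pos s h1 h2))))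
  have hgmono : StrictMonoOn g (Ioo 0 T) := by
    apply strictMonoOn_of_deriv_pos (convex_Ioo 0 T)
    · intro x hx
      exact ((hgd x hx.1 hx.2).continuousAt).continuousWithinAt
    · intro s hs
      rw [interior_Ioo] at hs
      rw [(hgd s hs.1 hs.2).deriv]
      have hc1s := hc1pos s hs.1 hs.2
      have hcs : (0:ℝ) < c s := lt_trans zero_lt_one (hcgt1 s hs.1 hs.2)
      have hc2s := hc2pos s (le_of_lt hs.1) hs.2
      have heq2 : 1 - ((c1 s * c1 s - c s * c2 s)/(c1 s)^2) = (c s * c2 s)/(c1 s)^2 := by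
        field_simp
        ring
      rw [heq2]
      positivity
  have hgsub : ∀ x, 0 < x → x < T → g x < x := by
    intro x h1 h2
    have : 0 < c x / c1 x := div_pos (lt_trans zero_lt_one (hcgt1 x h1 h2)) (hc1pos x h1 h2)
    rw [hgdef]
    simp only []
    linarith
  -- integrability of f on (1,∞)
  set k := 2*n-2 with hkdef
  have hk4 : 4 ≤ k := by omega
  set f : ℝ → ℝ := fun u => (u ^ k - 1) ^ (-(1:ℝ)/2) with hfdef
  have hbase : ∀ u : ℝ, 1 < u → 0 < u ^ k - 1 := by
    intro u hu
    have := one_lt_pow₀ hu (by omega : k ≠ 0)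
    linarith
  have hfcontOn : ContinuousOn f (Ioi 1) := by
    intro u hu
    have hb : ContinuousAt (fun u : ℝ => u ^ k - 1) u := by fun_prop
    exact (hb.rpow_const (Or.inl (ne_of_gt (hbase u hu)))).continuousWithinAt
  have hfnonneg : ∀ u : ℝ, 1 ≤ u → 0 ≤ f u := by
    intro u hu
    apply Real.rpow_nonneg
    have := one_le_pow₀ hu (n := k)
    linarith
  have hfpos : ∀ u : ℝ, 1 < u → 0 < f u := fun u hu =>
    Real.rpow_pos_of_pos (hbase u hu) _
  have hint1 : IntegrableOn f (Ioc 1 2) := by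
    have hbi : IntervalIntegrable (fun x : ℝ => (x - 1) ^ (-(1:ℝ)/2)) volume 1 2 := by
      have h0 := (intervalIntegral.intervalIntegrable_rpow' (r := -(1:ℝ)/2) (by norm_num)
        (a := 0) (b := 1)).comp_sub_right 1
      have e1 : (0:ℝ)+1 = 1 := by norm_num
      have e2 : (1:ℝ)+1 = 2 := by norm_num
      rw [e1, e2] at h0
      exact h0
    rw [intervalIntegrable_iff_integrableOn_Ioc_of_le (by norm_num)] at hbi
    apply hbi.integrable.mono'
    · exact (hfcontOn.mono (Ioc_subset_Ioi_self)).aestronglyMeasurable measurableSet_Ioc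
    · filter_upwards [ae_restrict_mem measurableSet_Ioc] with u hu
      rw [Real.norm_of_nonneg (hfnonneg u (le_of_lt hu.1))]
      show (u ^ k - 1) ^ (-(1:ℝ)/2) ≤ (u - 1) ^ (-(1:ℝ)/2)
      apply Real.rpow_le_rpow_of_nonpos (by linarith [hu.1]) ?_ (by norm_num)
      have := le_self_pow₀ (le_of_lt hu.1 : (1:ℝ) ≤ u) (by omega : k ≠ 0)
      linarith
  have hint2 : IntegrableOn f (Ioi 2) := by
    have hbi : IntegrableOn (fun x : ℝ => (2:ℝ)^((1:ℝ)/2) * x ^ (-(k:ℝ)/2)) (Ioi 2) := by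
      apply Integrable.const_mul
      apply integrableOn_Ioi_rpow_of_lt ?_ zero_lt_two
      rw [div_lt_iff₀ (by norm_num)]
      have : (4:ℝ) ≤ (k:ℝ) := by exact_mod_cast hk4
      linarith
    apply hbi.integrable.mono'
    · exact (hfcontOn.mono (fun u (hu : u ∈ Ioi (2:ℝ)) => (lt_trans one_lt_two hu : (1:ℝ) < u))).aestronglyMeasurable
        measurableSet_Ioi
    · filter_upwards [ae_restrict_mem measurableSet_Ioi] with u hu
      have hu2 : (2:ℝ) < u := hu
      have hu1 : (1:ℝ) < u := by linarith
      have hu0 : (0:ℝ) < u := by linarith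
      rw [Real.norm_of_nonneg (hfnonneg u (le_of_lt hu1))]
      show (u ^ k - 1) ^ (-(1:ℝ)/2) ≤ (2:ℝ)^((1:ℝ)/2) * u ^ (-(k:ℝ)/2)
      have hstep1 : (u ^ k - 1) ^ (-(1:ℝ)/2) ≤ (u ^ k / 2) ^ (-(1:ℝ)/2) := by
        apply Real.rpow_le_rpow_of_nonpos (by positivity) ?_ (by norm_num)
        have h16 : (2:ℝ) ≤ u ^ k := by
          calc (2:ℝ) ≤ u := le_of_lt hu2
          _ ≤ u ^ k := le_self_pow₀ (le_of_lt hu1) (by omega)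
        linarith
      have hstep2 : (u ^ k / 2 : ℝ) ^ (-(1:ℝ)/2) = (2:ℝ)^((1:ℝ)/2) * u ^ (-(k:ℝ)/2) := by
        rw [show (-(1:ℝ)/2) = -((1:ℝ)/2) by ring]
        rw [Real.div_rpow (by positivity) (by norm_num)]
        rw [Real.rpow_neg (by norm_num : (0:ℝ) ≤ 2) ((1:ℝ)/2)]
        rw [div_eq_mul_inv, inv_inv, ← Real.rpow_natCast u k, ← Real.rpow_mul (le_of_lt hu0),
          show (k:ℝ) * -((1:ℝ)/2) = -(k:ℝ)/2 by ring]
        ring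
      calc (u ^ k - 1) ^ (-(1:ℝ)/2) ≤ (u ^ k / 2) ^ (-(1:ℝ)/2) := hstep1
      _ = (2:ℝ)^((1:ℝ)/2) * u ^ (-(k:ℝ)/2) := hstep2
  have hIntf : IntegrableOn f (Ioi 1) := by
    rw [← Ioc_union_Ioi_eq_Ioi (le_of_lt one_lt_two)]
    exact hint1.union hint2
  have hTf : T = ∫ u in Ioi (1:ℝ), f u := by rw [hT]
  set ψ : ℝ → ℝ := fun x => ∫ t in (1:ℝ)..x, f t with hψdef
  have hii : ∀ x : ℝ, 1 ≤ x → IntervalIntegrable f volume 1 x := by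
    intro x hx
    rw [intervalIntegrable_iff_integrableOn_Ioc_of_le hx]
    exact hIntf.mono_set Ioc_subset_Ioi_self
  have hψd : ∀ x : ℝ, 1 < x → HasDerivAt ψ (f x) x := by
    intro x hx
    exact intervalIntegral.integral_hasDerivAt_right (hii x (le_of_lt hx))
      (ContinuousOn.stronglyMeasurableAtFilter isOpen_Ioi hfcontOn x hx)
      ((hfcontOn x hx).continuousAt (isOpen_Ioi.mem_nhds hx))
  have hψmono : ∀ x y : ℝ, 1 ≤ x → x ≤ y → ψ x ≤ ψ y := by
    intro x y hx hxy
    have hixy : IntervalIntegrable f volume x y := by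
      rw [intervalIntegrable_iff_integrableOn_Ioc_of_le hxy]
      exact hIntf.mono_set (fun u hu => lt_of_lt_of_le (lt_of_le_of_lt hx hu.1) le_rfl)
    have hadd : ψ x + ∫ t in x..y, f t = ψ y :=
      intervalIntegral.integral_add_adjacent_intervals (hii x hx) hixy
    have hnn : 0 ≤ ∫ t in x..y, f t := by
      apply intervalIntegral.integral_nonneg hxy
      intro u hu
      exact hfnonneg u (le_trans hx hu.1)
    linarith
  have hφd : ∀ t, 0 < t → t < T → HasDerivAt (fun s => ψ (c s)) 1 t := by
    intro t h1 h2
    have hcd := (hψd (c t) (hcgt1 t h1 h2)).comp t (hdc t (hmemI t (le_of_lt h1) h2))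
    have hc1t := hc1pos t h1 h2
    have hfc : f (c t) * c1 t = 1 := by
      have hck : (c t) ^ k - 1 = (c1 t)^2 := by
        have := hfi t (le_of_lt h1) h2
        rw [hkdef]
        linarith
      show ((c t) ^ k - 1) ^ (-(1:ℝ)/2) * c1 t = 1
      rw [hck, ← Real.rpow_natCast (c1 t) 2, ← Real.rpow_mul (le_of_lt hc1t)]
      norm_num
      rw [show (-1:ℝ) = ((-1:ℤ):ℝ) by norm_num, Real.rpow_intCast]
      simp [ne_of_gt hc1t]
    have : HasDerivAt (fun s => ψ (c s)) (f (c t) * c1 t) t := hcd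
    rwa [hfc] at this
  have hKconst : ∀ t, 0 < t → t < T → ψ (c t) - t = ψ (c z) - z := by
    intro t h1 h2
    have hmin : 0 < min t z := lt_min h1 hz.1
    have hmax : max t z < T := max_lt h2 hz.2
    have hcont : ContinuousOn (fun s => ψ (c s) - s) (Icc (min t z) (max t z)) := by
      intro s hs
      have hs1 : 0 < s := lt_of_lt_of_le hmin hs.1
      have hs2 : s < T := lt_of_le_of_lt hs.2 hmax
      exact (((hφd s hs1 hs2).sub (hasDerivAt_id s)).continuousAt).continuousWithinAt
    have hder : ∀ s ∈ Ico (min t z) (max t z),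
        HasDerivWithinAt (fun s => ψ (c s) - s) 0 (Ici s) s := by
      intro s hs
      have hs1 : 0 < s := lt_of_lt_of_le hmin hs.1
      have hs2 : s < T := lt_trans hs.2 hmax
      have := (hφd s hs1 hs2).sub (hasDerivAt_id s)
      have h' : HasDerivWithinAt (fun s => ψ (c s) - s) (1 - 1) (Ici s) s := this.hasDerivWithinAt
      simpa using h'
    have hconst := constant_of_has_deriv_right_zero hcont hder
    have h1' := hconst t ⟨min_le_left t z, le_max_left t z⟩
    have h2' := hconst z ⟨min_le_right t z, le_max_right t z⟩
    rw [h1', h2']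
  have hK0 : ψ (c z) - z = 0 := by
    set P : ℝ → ℝ := fun x => ∫ u in Ioc 1 x, f u with hPdef
    have hIcc : IntegrableOn f (Icc 1 2) := by
      rw [integrableOn_Icc_iff_integrableOn_Ioc]
      exact hint1
    have hPcont : ContinuousOn P (Icc 1 2) := intervalIntegral.continuousOn_primitive hIcc
    have hcz : Tendsto c (𝓝[>] 0) (𝓝 1) := by
      have h2 := ((hdc 0 (hmemI 0 le_rfl hTpos)).continuousAt).tendsto
      rw [hc0] at h2
      exact h2.mono_left nhdsWithin_le_nhds
    have hIooev : Ioo (0:ℝ) T ∈ 𝓝[>] (0:ℝ) := by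
      refine mem_nhdsWithin.mpr ⟨Iio T, isOpen_Iio, hTpos, ?_⟩
      intro x hx
      exact ⟨hx.2, hx.1⟩
    have hev : ∀ᶠ t in 𝓝[>] (0:ℝ), c t ∈ Icc 1 2 := by
      have h1 : ∀ᶠ t in 𝓝[>] (0:ℝ), c t < 2 := hcz.eventually_lt_const one_lt_two
      filter_upwards [h1, hIooev] with s hs1 hs2
      exact ⟨hcpos s (le_of_lt hs2.1) hs2.2, le_of_lt hs1⟩
    have hPt : Tendsto (fun t => P (c t)) (𝓝[>] (0:ℝ)) (𝓝 (P 1)) := by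
      have hPc : ContinuousWithinAt P (Icc 1 2) 1 := hPcont 1 (left_mem_Icc.mpr one_le_two)
      apply hPc.tendsto.comp
      rw [tendsto_nhdsWithin_iff]
      exact ⟨hcz, hev⟩
    have hP1 : P 1 = 0 := by rw [hPdef]; simp
    have hlim0 : Tendsto (fun t => ψ (c t) - t) (𝓝[>] (0:ℝ)) (𝓝 0) := by
      have hbase : Tendsto (fun t : ℝ => P (c t) - t) (𝓝[>] (0:ℝ)) (𝓝 (P 1 - 0)) :=
        hPt.sub (tendsto_id.mono_left nhdsWithin_le_nhds)
      rw [hP1, sub_zero] at hbase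
      apply hbase.congr'
      filter_upwards [hev] with s hs
      have : ψ (c s) = P (c s) := intervalIntegral.integral_of_le hs.1
      rw [this]
    have hlimK : Tendsto (fun t : ℝ => ψ (c t) - t) (𝓝[>] (0:ℝ)) (𝓝 (ψ (c z) - z)) := by
      apply tendsto_const_nhds.congr'
      filter_upwards [hIooev] with s hs
      exact (hKconst s hs.1 hs.2).symm
    exact (tendsto_nhds_unique hlimK hlim0)
  have hψt : ∀ t, 0 < t → t < T → ψ (c t) = t := by
    intro t h1 h2
    have := hKconst t h1 h2
    rw [hK0] at this
    linarith
  have hunb : ∀ M : ℝ, ∃ x, 0 < x ∧ x < T ∧ M < c x := by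
    intro M
    by_contra hbd
    push_neg at hbd
    set M' := max M 2 with hM'
    have hM2 : (2:ℝ) ≤ M' := le_max_right _ _
    have hub : ∀ t, 0 < t → t < T → t ≤ ψ M' := by
      intro t h1 h2
      have hcle : c t ≤ M' := le_trans (hbd t h1 h2) (le_max_left M 2)
      have := hψmono (c t) M' (le_of_lt (hcgt1 t h1 h2)) hcle
      have hψt' := hψt t h1 h2
      linarith
    have hTle : T ≤ ψ M' := by
      by_contra hlt
      push_neg at hlt
      set t0 := (max (ψ M') 0 + T)/2 with ht0
      have hmx : max (ψ M') 0 < T := by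
        apply max_lt hlt hTpos
      have h1 : 0 < t0 := by
        have := le_max_right (ψ M') 0
        rw [ht0]; nlinarith
      have h2 : t0 < T := by rw [ht0]; linarith
      have h3 : ψ M' < t0 := by
        have := le_max_left (ψ M') 0
        rw [ht0]; nlinarith
      linarith [hub t0 h1 h2]
    have hint1M : IntegrableOn f (Ioc 1 M') :=
      hIntf.mono_set (fun u hu => hu.1)
    have hintM : IntegrableOn f (Ioi M') :=
      hIntf.mono_set (fun u hu => lt_trans (by linarith : (1:ℝ) < M') hu)
    have hsplit : (∫ u in Ioi (1:ℝ), f u) = (∫ u in Ioc 1 M', f u) + ∫ u in Ioi M', f u := by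
      rw [← MeasureTheory.setIntegral_union (Ioc_disjoint_Ioi le_rfl) measurableSet_Ioi
        hint1M hintM, Ioc_union_Ioi_eq_Ioi (by linarith : (1:ℝ) ≤ M')]
    have hψM : ψ M' = ∫ u in Ioc 1 M', f u :=
      intervalIntegral.integral_of_le (by linarith : (1:ℝ) ≤ M')
    have htail : 0 < ∫ u in Ioi M', f u := by
      have hae : 0 ≤ᵐ[volume.restrict (Ioi M')] f := by
        filter_upwards [ae_restrict_mem measurableSet_Ioi] with u hu
        exact hfnonneg u (by linarith [mem_Ioi.mp hu])
      rw [setIntegral_pos_iff_support_of_nonneg_ae hae hintM]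
      have hss : Ioi M' ⊆ Function.support f ∩ Ioi M' := by
        intro u hu
        have hu1 : (1:ℝ) < u := lt_trans (by linarith) hu
        exact ⟨ne_of_gt (hfpos u hu1), hu⟩
      have hmono := measure_mono (μ := (volume : Measure ℝ)) hss
      rw [Real.volume_Ioi] at hmono
      exact lt_of_lt_of_le (by norm_num) hmono
    rw [hTf, hsplit, ← hψM] at hTle
    linarith
  -- point with very negative g
  have ht1 : ∃ t1, 0 < t1 ∧ t1 < z ∧ g t1 < -T := by
    have hzT1 : (0:ℝ) < z + T + 1 := by linarith [hz.1, hz.2, hTpos]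
    have hcont0 : Tendsto c1 (𝓝 0) (𝓝 0) := by
      have h := ((hdc1 0 (hmemI 0 le_rfl hTpos)).continuousAt).tendsto
      rwa [hc0'] at h
    have hev1 : ∀ᶠ s in 𝓝[>] (0:ℝ), c1 s < 1/(z + T + 1) :=
      (hcont0.mono_left nhdsWithin_le_nhds).eventually_lt_const (by positivity)
    have hev2 : Ioo (0:ℝ) z ∈ 𝓝[>] (0:ℝ) := by
      refine mem_nhdsWithin.mpr ⟨Iio z, isOpen_Iio, hz.1, ?_⟩
      intro x hx
      exact ⟨hx.2, hx.1⟩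
    obtain ⟨t1, hlt, hmem2⟩ := (hev1.and (eventually_of_mem hev2 (fun x hx => hx))).exists
    refine ⟨t1, hmem2.1, hmem2.2, ?_⟩
    have ht1T : t1 < T := lt_trans hmem2.2 hz.2
    have hc1t1 := hc1pos t1 hmem2.1 ht1T
    have hct1 := hcpos t1 (le_of_lt hmem2.1) ht1T
    have h5 : z + T + 1 < 1 / c1 t1 := by
      rw [lt_div_iff₀ hc1t1, mul_comm]
      exact (lt_div_iff₀ hzT1).mp hlt
    have h6 : 1 / c1 t1 ≤ c t1 / c1 t1 := by gcongr
    have : g t1 = t1 - c t1 / c1 t1 := rfl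
    rw [this]
    linarith [hmem2.2]
  have hgz : g z = 0 := by
    have h := heg z hz.1 hz.2
    rw [hze] at h
    have hvz := hvpos z hz.1 hz.2
    rcases mul_eq_zero.mp h.symm with h' | h'
    · exact absurd h' (ne_of_gt hvz)
    · exact h'
  obtain ⟨t1, ht1a, ht1b, ht1c⟩ := ht1
  have hsub2 : Icc t1 z ⊆ Ioo 0 T := fun s hs =>
    ⟨lt_of_lt_of_le ht1a hs.1, lt_of_le_of_lt hs.2 hz.2⟩
  have hgcont : ∀ a b : ℝ, 0 < a → b < T → ContinuousOn g (Icc a b) := by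
    intro a b ha hb s hs
    have hs1 : 0 < s := lt_of_lt_of_le ha hs.1
    have hs2 : s < T := lt_of_le_of_lt hs.2 hb
    exact ((hgd s hs1 hs2).continuousAt).continuousWithinAt
  obtain ⟨ℓ, hℓmem, hgℓ⟩ := intermediate_value_Ioo (le_of_lt ht1b)
    (hgcont t1 z ht1a hz.2) (⟨ht1c, by rw [hgz]; linarith⟩ : -T ∈ Ioo (g t1) (g z))
  have hℓIoo : ℓ ∈ Ioo 0 T := ⟨lt_trans ht1a hℓmem.1, lt_trans hℓmem.2 hz.2⟩
  have hinj := hgmono.injOn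
  refine ⟨ℓ, hℓIoo, hℓmem.2, ?_, ?_, ?_, ?_⟩
  · rw [heg ℓ hℓIoo.1 hℓIoo.2, hgℓ]
    ring
  · intro t ht hyp
    rw [heg t ht.1 ht.2] at hyp
    have hvt := hvpos t ht.1 ht.2
    have hgt : g t = -T := by
      have h2 : v t * (g t + T) = 0 := by linear_combination hyp
      rcases mul_eq_zero.mp h2 with h' | h'
      · exact absurd h' (ne_of_gt hvt)
      · linarith
    exact hinj ht hℓIoo (by rw [hgt, hgℓ])
  · intro α hα0 hαℓ t ht
    have hαT : α < T := lt_of_le_of_lt hαℓ hℓIoo.2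
    have hgα : g α ≤ -T := by
      rcases eq_or_lt_of_le hαℓ with h' | h'
      · rw [h', hgℓ]
      · exact le_of_lt (by rw [← hgℓ]; exact hgmono ⟨hα0, hαT⟩ hℓIoo h')
    have hgtT : g t < T := lt_trans (hgsub t ht.1 ht.2) ht.2
    rw [heg t ht.1 ht.2, heg α hα0 hαT]
    have hrw : v α * (v t * g t) + v α * g α * (v t) = v α * v t * (g t + g α) := by ring
    rw [hrw]
    exact ne_of_lt (mul_neg_of_pos_of_neg
      (mul_pos (hvpos α hα0 hαT) (hvpos t ht.1 ht.2)) (by linarith))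
  · intro α hℓα hαT
    have hα0 : 0 < α := lt_trans hℓIoo.1 hℓα
    have hgα : -T < g α := by
      rw [← hgℓ]
      exact hgmono hℓIoo ⟨hα0, hαT⟩ hℓα
    have hgαT : g α < T := lt_trans (hgsub α hα0 hαT) hαT
    obtain ⟨m, hm⟩ : ∃ m : ℝ, m = -(g α) := ⟨_, rfl⟩
    have hmT : m < T := by rw [hm]; linarith
    have hmgt : -T < m := by rw [hm]; linarith
    obtain ⟨ε, hε⟩ : ∃ ε : ℝ, ε = (T - m)/2 := ⟨_, rfl⟩
    have hε0 : 0 < ε := by rw [hε]; linarith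
    obtain ⟨ta, hta1, hta2, hta3⟩ := hunb (max 2 (2/ε))
    set t2 := max ta (T - ε/2) with ht2def
    have ht2T : t2 < T := max_lt hta2 (by linarith)
    have ht20 : 0 < t2 := lt_of_lt_of_le hta1 (le_max_left _ _)
    have hct2 : max 2 (2/ε) < c t2 := by
      rcases le_or_gt t2 ta with h' | h'
      · have : t2 = ta := le_antisymm h' (le_max_left _ _)
        rw [this]; exact hta3
      · exact lt_of_lt_of_le hta3
          (le_of_lt (hcmono ⟨le_of_lt hta1, hta2⟩ ⟨le_of_lt ht20, ht2T⟩ h'))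
    have hc1t2 := hc1pos t2 ht20 ht2T
    have hfit2 := hfi t2 (le_of_lt ht20) ht2T
    have hht2 : c t2 / c1 t2 < ε := by
      rw [div_lt_iff₀ hc1t2]
      have hc2' : (2:ℝ) < c t2 := lt_of_le_of_lt (le_max_left _ _) hct2
      have hc2'' : 2/ε < c t2 := lt_of_le_of_lt (le_max_right _ _) hct2
      have h4k : (c t2)^4 ≤ (c t2)^k := pow_le_pow_right₀ (by linarith) hk4
      have h10 : 2 < ε * c t2 := by rw [div_lt_iff₀ hε0] at hc2''; linarith
      have h11 : 4 < (ε * c t2)^2 := by nlinarith [h10]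
      have h12 : 4*(c t2)^2 < ε^2*(c t2)^4 := by
        nlinarith [mul_lt_mul_of_pos_right h11 (show (0:ℝ) < (c t2)^2 by positivity)]
      have hq2a : (4:ℝ) < (c t2)^2 := by nlinarith [hc2']
      have hq2 : (16:ℝ) < (c t2)^4 := by nlinarith [hq2a, sq_nonneg ((c t2)^2 - 4)]
      have hq1 : (ε:ℝ)^2 * ((c t2)^4 - 1) ≤ ε^2 * ((c t2)^k - 1) := by
        nlinarith [h4k, sq_nonneg ε]
      have hq3 : (c t2)^2 < ε^2 * ((c t2)^4 - 1) := by
        nlinarith [h12, hq2, mul_nonneg (sq_nonneg ε) (by linarith : (0:ℝ) ≤ (c t2)^4 - 16)]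
      have hsq : (c t2)^2 < (ε * c1 t2)^2 := by
        calc (c t2)^2 < ε^2*((c t2)^4 - 1) := hq3
        _ ≤ ε^2 * ((c t2)^k - 1) := hq1
        _ = (ε * c1 t2)^2 := by rw [← hfit2]; ring
      exact lt_of_pow_lt_pow_left₀ 2 (by positivity) hsq
    have hgt2 : m < g t2 := by
      have h7 : T - ε/2 ≤ t2 := le_max_right _ _
      have h8 : g t2 = t2 - c t2 / c1 t2 := rfl
      have h9 : m = T - 2*ε := by rw [hε]; ring
      rw [h8, h9]
      linarith [hht2]
    have hlt12 : t1 < t2 := by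
      by_contra hcon
      push_neg at hcon
      have ht1T' : t1 < T := lt_trans ht1b hz.2
      have hmo := hgmono.monotoneOn ⟨ht20, ht2T⟩ ⟨ht1a, ht1T'⟩ hcon
      linarith [lt_trans ht1c hmgt]
    obtain ⟨β, hβmem, hgβ⟩ := intermediate_value_Ioo (le_of_lt hlt12)
      (hgcont t1 t2 ht1a ht2T) (⟨lt_trans ht1c hmgt, hgt2⟩ : m ∈ Ioo (g t1) (g t2))
    have hβIoo : β ∈ Ioo 0 T := ⟨lt_trans ht1a hβmem.1, lt_trans hβmem.2 ht2T⟩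
    refine ⟨β, hβIoo, ?_, ?_⟩
    · rw [heg β hβIoo.1 hβIoo.2, heg α hα0 hαT, hgβ, hm]
      ring
    · intro t ht hyp
      rw [heg t ht.1 ht.2, heg α hα0 hαT] at hyp
      have hvt := hvpos t ht.1 ht.2
      have hvα := hvpos α hα0 hαT
      have hgt : g t = m := by
        have h2 : v α * v t * (g t + g α) = 0 := by linear_combination hyp
        rcases mul_eq_zero.mp h2 with h' | h'
        · exact absurd h' (ne_of_gt (mul_pos hvα hvt))
        · rw [hm]; linarith
      exact hinj ht hβIoo (by rw [hgt, hgβ])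
end

section
/- Let n ≥ 2, T_n = ∫₁^∞ (u^{2n−2} − 1)^{−1/2} du, c = c_n the maximal solution of c·c'' = (n−1)(1 + c'²), c(0) = 1, c'(0) = 0, v(t) = c'(t)(1 + c'(t)²)^{−1/2}, and e(t) = −c(t)^{2−n} + t·v(t). Then for all α, β ∈ (0, T_n): v(α)·e(β) + e(α)·v(β) = 0 if and only if α + β = c(α)/c'(α) + c(β)/c'(β). -/
open Real MeasureTheory Set Filter Topology ENNReal

/-- Lindelöf's tangent construction for the `n`-catenoid in `ℝ^{n+1}`: for `α, β ∈ (0, T_n)`,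
`v(α)e(β) + e(α)v(β) = 0` if and only if `α + β = c(α)/c'(α) + c(β)/c'(β)`, i.e. the
tangents to the catenary at `(c(α), −α)` and `(c(β), β)` meet on the axis. -/
theorem stmt9 (n : ℕ) (hn : 2 ≤ n)
    (T : ℝ≥0∞)
    (hT : T = ∫⁻ u in Set.Ioi (1:ℝ), ENNReal.ofReal ((u ^ (2*n-2) - 1) ^ (-(1:ℝ)/2)))
    (I : Set ℝ) (hI : I = {t : ℝ | ENNReal.ofReal |t| < T})
    (c : ℝ → ℝ)
    (hc : ContDiffOn ℝ (⊤ : ℕ∞) c I)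
    (hceven : ∀ t ∈ I, c (-t) = c t)
    (hc0 : c 0 = 1) (hc0' : deriv c 0 = 0)
    (hode : ∀ t ∈ I, c t * deriv (deriv c) t = (n - 1 : ℝ) * (1 + (deriv c t) ^ 2))
    (v e : ℝ → ℝ)
    (hv : ∀ t, v t = deriv c t / Real.sqrt (1 + (deriv c t) ^ 2))
    (he : ∀ t, e t = -(c t ^ ((2:ℤ) - n)) + t * v t) :
    ∀ α ∈ I, ∀ β ∈ I, 0 < α → 0 < β →
      (v α * e β + e α * v β = 0 ↔
        α + β = c α / deriv c α + c β / deriv c β) := by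
  -- `T` is positive
  have hTpos : 0 < T := by
    rw [hT]
    have hmeas : Measurable fun u : ℝ =>
        ENNReal.ofReal ((u ^ (2*n-2) - 1) ^ (-(1:ℝ)/2)) := by measurability
    rw [MeasureTheory.setLIntegral_pos_iff hmeas]
    have hsub : Set.Ioi (1:ℝ) ⊆
        Function.support (fun u : ℝ => ENNReal.ofReal ((u ^ (2*n-2) - 1) ^ (-(1:ℝ)/2)))
          ∩ Set.Ioi 1 := by
      intro u hu
      refine ⟨?_, hu⟩
      have h1 : (0:ℝ) < u ^ (2*n-2) - 1 := by
        have : (1:ℝ) < u ^ (2*n-2) := one_lt_pow₀ (Set.mem_Ioi.mp hu) (by omega)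
        linarith
      have h2 : (0:ℝ) < (u ^ (2*n-2) - 1) ^ (-(1:ℝ)/2) := Real.rpow_pos_of_pos h1 _
      simp only [Function.mem_support, ne_eq, ENNReal.ofReal_eq_zero, not_le]
      exact h2
    calc (0:ℝ≥0∞) < volume (Set.Ioi (1:ℝ)) := by rw [Real.volume_Ioi]; exact ENNReal.zero_lt_top
    _ ≤ _ := measure_mono hsub
  -- basic facts about `I`
  have hmemI : ∀ {s t : ℝ}, t ∈ I → |s| ≤ |t| → s ∈ I := by
    intro s t ht hle
    rw [hI] at ht ⊢
    exact lt_of_le_of_lt (ENNReal.ofReal_le_ofReal hle) ht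
  have h0I : (0:ℝ) ∈ I := by rw [hI]; simpa using hTpos
  have hIopen : IsOpen I := by
    rw [hI]
    exact (isOpen_Iio).preimage (ENNReal.continuous_ofReal.comp continuous_abs)
  have hIconv : Convex ℝ I := by
    rw [convex_iff_ordConnected]
    constructor
    intro a ha b hb x hx
    have habs : |x| ≤ |a| ⊔ |b| := by
      apply abs_le.mpr
      constructor
      · have h1 := neg_abs_le a
        have h2 := le_max_left |a| |b|
        have h3 := hx.1
        simp only [le_sup_iff, neg_le]
        left
        linarith
      · have h1 := le_abs_self b
        have h2 := le_max_right |a| |b|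
        have h3 := hx.2
        linarith
    rcases le_total |a| |b| with h | h
    · exact hmemI hb (le_trans habs (sup_le h le_rfl))
    · exact hmemI ha (le_trans habs (sup_le le_rfl h))
  -- smoothness consequences
  obtain ⟨hcdiff, hc'⟩ := (contDiffOn_infty_iff_deriv_of_isOpen hIopen).mp hc
  obtain ⟨hc'diff, hc''⟩ := (contDiffOn_infty_iff_deriv_of_isOpen hIopen).mp hc'
  have hder : ∀ t ∈ I, HasDerivAt c (deriv c t) t := fun t ht =>
    (hcdiff.differentiableAt (hIopen.mem_nhds ht)).hasDerivAt
  have hder' : ∀ t ∈ I, HasDerivAt (deriv c) (deriv (deriv c) t) t := fun t ht =>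
    (hc'diff.differentiableAt (hIopen.mem_nhds ht)).hasDerivAt
  have hccont : ContinuousOn c I := hcdiff.continuousOn
  have hc'cont : ContinuousOn (deriv c) I := hc'diff.continuousOn
  -- `c` never vanishes on `I`
  have hcne : ∀ t ∈ I, c t ≠ 0 := by
    intro t ht hzero
    have h := hode t ht
    rw [hzero] at h
    have hn2 : (2:ℝ) ≤ (n:ℝ) := by exact_mod_cast hn
    nlinarith [sq_nonneg (deriv c t)]
  -- `c` is positive on `I`
  have hcpos : ∀ t ∈ I, 0 < c t := by
    intro t ht
    by_contra hle
    push_neg at hle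
    have hsub : Set.uIcc 0 t ⊆ I := hIconv.ordConnected.uIcc_subset h0I ht
    have hmem : (0:ℝ) ∈ Set.uIcc (c 0) (c t) := by
      rw [hc0]
      exact Set.mem_uIcc.mpr (Or.inr ⟨hle, zero_le_one⟩)
    obtain ⟨s, hs, hcs⟩ := intermediate_value_uIcc (hccont.mono hsub) hmem
    exact hcne s (hsub hs) hcs
  -- the first integral : `1 + c'^2 = c^(2n-2)`
  have hfi : ∀ t ∈ I, 1 + (deriv c t)^2 = c t ^ (2*n-2) := by
    set F : ℝ → ℝ := fun t =>
      Real.log (1 + (deriv c t)^2) - (2*(n:ℝ)-2) * Real.log (c t) with hF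
    have hderF : ∀ t ∈ I, HasDerivWithinAt F 0 I t := by
      intro t ht
      have h1 : (0:ℝ) < 1 + (deriv c t)^2 := by positivity
      have h2 := hcpos t ht
      have hd1 : HasDerivAt (fun t => Real.log (1 + (deriv c t)^2))
          ((((2:ℕ):ℝ) * deriv c t ^ (2-1) * deriv (deriv c) t) / (1 + (deriv c t)^2)) t :=
        HasDerivAt.log (((hder' t ht).pow 2).const_add 1) (ne_of_gt h1)
      have hd2 : HasDerivAt (fun t => Real.log (c t)) (deriv c t / c t) t :=
        HasDerivAt.log (hder t ht) (ne_of_gt h2)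
      have hd : HasDerivAt F
          ((((2:ℕ):ℝ) * deriv c t ^ (2-1) * deriv (deriv c) t) / (1 + (deriv c t)^2)
            - (2*(n:ℝ)-2) * (deriv c t / c t)) t :=
        hd1.sub (hd2.const_mul (2*(n:ℝ)-2))
      have hzero : (((2:ℕ):ℝ) * deriv c t ^ (2-1) * deriv (deriv c) t) / (1 + (deriv c t)^2)
            - (2*(n:ℝ)-2) * (deriv c t / c t) = 0 := by
        have hodet := hode t ht
        field_simp
        linear_combination (2 * deriv c t) * hodet
      rw [hzero] at hd
      exact hd.hasDerivWithinAt
    have hconst : ∀ t ∈ I, F t = F 0 := by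
      intro t ht
      have hb := hIconv.norm_image_sub_le_of_norm_hasDerivWithin_le
        (C := 0) (f' := fun _ => (0:ℝ)) hderF (fun x _ => by simp) h0I ht
      rw [zero_mul] at hb
      have := norm_le_zero_iff.mp hb
      linarith [sub_eq_zero.mp this]
    intro t ht
    have heq : F t = 0 := by
      rw [hconst t ht, hF]
      simp [hc0', hc0]
    have h1 : (0:ℝ) < 1 + (deriv c t)^2 := by positivity
    have h2 := hcpos t ht
    have hcast : ((2*n-2 : ℕ) : ℝ) = 2*(n:ℝ)-2 := by
      have : (2:ℕ) ≤ 2*n := by omega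
      push_cast [Nat.cast_sub this]
      ring
    have hlog : Real.log (1 + (deriv c t)^2) = Real.log (c t ^ (2*n-2)) := by
      rw [Real.log_pow, hcast]
      have : F t = Real.log (1 + (deriv c t)^2) - (2*(n:ℝ)-2) * Real.log (c t) := rfl
      linarith [heq, this ▸ heq]
    exact Real.log_injOn_pos (Set.mem_Ioi.mpr h1) (Set.mem_Ioi.mpr (pow_pos h2 _)) hlog
  -- `c'` is positive on `I ∩ (0, ∞)`
  have hdd : ∀ t ∈ I, deriv (deriv c) t = (n-1:ℝ) * (1 + (deriv c t)^2) / c t := by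
    intro t ht
    rw [eq_div_iff (hcne t ht)]
    linarith [hode t ht]
  have hc'pos : ∀ t ∈ I, 0 < t → 0 < deriv c t := by
    intro t ht htpos
    have hmono : StrictMonoOn (deriv c) I := by
      apply strictMonoOn_of_deriv_pos hIconv hc'cont
      intro x hx
      rw [hIopen.interior_eq] at hx
      rw [hdd x hx]
      have hcx := hcpos x hx
      have hn2 : (2:ℝ) ≤ (n:ℝ) := by exact_mod_cast hn
      apply div_pos _ hcx
      nlinarith [sq_nonneg (deriv c x)]
    have := hmono h0I ht htpos
    rwa [hc0'] at this
  -- `sqrt(1 + c'^2) = c^(n-1)`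
  have hsqrt : ∀ t ∈ I, Real.sqrt (1 + (deriv c t)^2) = c t ^ (n-1) := by
    intro t ht
    rw [hfi t ht]
    have hpow : c t ^ (2*n-2) = (c t ^ (n-1))^2 := by
      rw [← pow_mul]
      congr 1
      omega
    rw [hpow, Real.sqrt_sq (pow_nonneg (hcpos t ht).le _)]
  -- the key identity : `e t = v t * (t - c t / c' t)`
  have hkey : ∀ t ∈ I, 0 < t → e t = v t * (t - c t / deriv c t) := by
    intro t ht htpos
    have hcp := hcpos t ht
    have hc'p := hc'pos t ht htpos
    rw [he, hv, hsqrt t ht]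
    have hz : c t ^ ((2:ℤ) - n) = c t / c t ^ (n-1) := by
      rw [eq_div_iff (by positivity : c t ^ (n-1) ≠ 0), ← zpow_natCast (c t) (n-1),
        ← zpow_add₀ (ne_of_gt hcp)]
      have hexp : ((2:ℤ) - n) + ((n-1 : ℕ) : ℤ) = 1 := by
        push_cast [Nat.cast_sub (show 1 ≤ n by omega)]
        ring
      rw [hexp, zpow_one]
    rw [hz]
    field_simp
    ring
  -- conclusion
  intro α hα β hβ hαpos hβpos
  have hvα : 0 < v α := by
    rw [hv]
    exact div_pos (hc'pos α hα hαpos) (Real.sqrt_pos.mpr (by positivity))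
  have hvβ : 0 < v β := by
    rw [hv]
    exact div_pos (hc'pos β hβ hβpos) (Real.sqrt_pos.mpr (by positivity))
  rw [hkey α hα hαpos, hkey β hβ hβpos]
  constructor
  · intro h0
    have hfac : v α * v β *
        ((α + β) - (c α / deriv c α + c β / deriv c β)) = 0 := by
      linear_combination h0
    have hne : v α * v β ≠ 0 := by positivity
    have := (mul_eq_zero.mp hfac).resolve_left hne
    linarith
  · intro hsum
    linear_combination v α * v β * hsum
end

section
/- For a > 0, define for s, t ∈ ℝ: v(a,s) = cosh(a)·sinh(s)·(cosh²(a)·cosh²(s) − 1)^{−1/2}, B(a,t) = cosh(a)·sinh²(t)·(cosh²(a)·cosh²(t) − 1)^{−3/2}, f(a,s) = sinh²(a)·cosh(s)·(cosh²(a)·cosh²(s) − 1)^{−1}, and e(a,s) = f(a,s) − v(a,s)·∫₀^s B(a,t) dt. Then e(a,·) is an even function of s with e(a,0) = 1, and e(a,·) has exactly one zero z(a) in the open interval (0, ∞). -/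
open Real MeasureTheory Set Filter Topology

set_option maxHeartbeats 1000000 in
/-- On the catenoid `𝒞_a` in `ℍ² × ℝ`, the variation Jacobi field
`e(a,s) = f(a,s) − v(a,s)·∫₀^s B(a,t) dt` is even, equals `1` at `s = 0`, and has exactly
one zero in `(0, ∞)`. -/
theorem stmt10 (a : ℝ) (ha : 0 < a)
    (v B f e : ℝ → ℝ)
    (hv : ∀ s, v s = Real.cosh a * Real.sinh s *
      (Real.cosh a ^ 2 * Real.cosh s ^ 2 - 1) ^ (-(1:ℝ)/2))
    (hB : ∀ t, B t = Real.cosh a * Real.sinh t ^ 2 *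
      (Real.cosh a ^ 2 * Real.cosh t ^ 2 - 1) ^ (-(3:ℝ)/2))
    (hf : ∀ s, f s = Real.sinh a ^ 2 * Real.cosh s *
      (Real.cosh a ^ 2 * Real.cosh s ^ 2 - 1)⁻¹)
    (he : ∀ s, e s = f s - v s * ∫ t in (0:ℝ)..s, B t) :
    (∀ s, e (-s) = e s) ∧ e 0 = 1 ∧
    ∃ z : ℝ, 0 < z ∧ e z = 0 ∧ ∀ s, 0 < s → e s = 0 → s = z := by
  set c : ℝ := Real.cosh a with hc_def
  have hc : 1 < c := Real.one_lt_cosh.2 (ne_of_gt ha)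
  have hc0 : 0 < c := lt_trans one_pos hc
  set Q : ℝ → ℝ := fun s => c ^ 2 * Real.cosh s ^ 2 - 1 with hQ_def
  have hQpos : ∀ s, 0 < Q s := by
    intro s
    have h1 := Real.one_le_cosh s
    have h2 : 1 < c ^ 2 := by nlinarith
    have h3 : 1 ≤ Real.cosh s ^ 2 := by nlinarith
    have h4 : c ^ 2 * 1 ≤ c ^ 2 * Real.cosh s ^ 2 := by nlinarith
    simp only [hQ_def]
    nlinarith
  -- exponent identity
  have hid : ∀ s, Q s ^ (-(1:ℝ)/2) = Q s * Q s ^ (-(3:ℝ)/2) := by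
    intro s
    rw [show (-(1:ℝ)/2) = 1 + (-(3:ℝ)/2) by norm_num, Real.rpow_add (hQpos s),
      Real.rpow_one]
  -- derivative of Q
  have hQd : ∀ s, HasDerivAt Q (2 * c ^ 2 * Real.cosh s * Real.sinh s) s := by
    intro s
    have h := (((Real.hasDerivAt_cosh s).pow 2).const_mul (c ^ 2)).sub_const 1
    refine h.congr_deriv (Eq.symm ?_)
    ring
  -- continuity facts
  have hQc : Continuous Q := by
    simp only [hQ_def]
    fun_prop
  have hP3c : Continuous (fun t => Q t ^ (-(3:ℝ)/2)) :=
    continuous_iff_continuousAt.2 fun t =>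
      (hQc.continuousAt).rpow_const (Or.inl (hQpos t).ne')
  have hBc : Continuous B := by
    have hB' : B = fun t => c * Real.sinh t ^ 2 * Q t ^ (-(3:ℝ)/2) := funext hB
    rw [hB']
    exact ((continuous_const.mul (Real.continuous_sinh.pow 2)).mul hP3c)
  -- the integral function
  set g : ℝ → ℝ := fun s => ∫ t in (0:ℝ)..s, B t with hg_def
  have hgd : ∀ s, HasDerivAt g (B s) s := by
    intro s
    exact intervalIntegral.integral_hasDerivAt_right
      (hBc.intervalIntegrable _ _)
      (hBc.stronglyMeasurableAtFilter _ _)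
      hBc.continuousAt
  -- derivative of v
  have hvd : ∀ s, HasDerivAt v
      (c * (c ^ 2 - 1) * Real.cosh s * Q s ^ (-(3:ℝ)/2)) s := by
    intro s
    have hv' : v = fun s => c * Real.sinh s * Q s ^ (-(1:ℝ)/2) := funext hv
    rw [hv']
    have h1 : HasDerivAt (fun s => Q s ^ (-(1:ℝ)/2))
        ((2 * c ^ 2 * Real.cosh s * Real.sinh s) * (-(1:ℝ)/2) * Q s ^ ((-(1:ℝ)/2) - 1)) s :=
      (hQd s).rpow_const (Or.inl (hQpos s).ne')
    have h2 := ((Real.hasDerivAt_sinh s).const_mul c).mul h1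
    refine h2.congr_deriv (Eq.symm ?_)
    have he1 : ((-(1:ℝ)/2) - 1) = (-(3:ℝ)/2) := by norm_num
    rw [he1, hid s]
    have hcs := Real.cosh_sq s
    simp only [hQ_def]
    linear_combination (-(c ^ 3) * Real.cosh s *
      ((c ^ 2 * Real.cosh s ^ 2 - 1) ^ (-(3:ℝ)/2))) * hcs
  -- sinh a ^ 2 in terms of c
  have hsa : Real.sinh a ^ 2 = c ^ 2 - 1 := by
    have h := Real.cosh_sq a
    rw [← hc_def] at h
    linarith
  -- derivative of f
  have hfd : ∀ s, HasDerivAt f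
      ((c ^ 2 - 1) * Real.sinh s * (Q s)⁻¹
        + (c ^ 2 - 1) * Real.cosh s *
          (-(2 * c ^ 2 * Real.cosh s * Real.sinh s) / Q s ^ 2)) s := by
    intro s
    have hf' : f = fun s => (c ^ 2 - 1) * Real.cosh s * (Q s)⁻¹ := by
      funext u; rw [hf u, hsa]
    rw [hf']
    have h1 : HasDerivAt (fun s => (Q s)⁻¹)
        (-(2 * c ^ 2 * Real.cosh s * Real.sinh s) / Q s ^ 2) s :=
      (hQd s).inv (hQpos s).ne'
    exact ((Real.hasDerivAt_cosh s).const_mul ((c:ℝ) ^ 2 - 1)).mul h1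
  -- derivative of e
  have hed : ∀ s, HasDerivAt e
      (((c ^ 2 - 1) * Real.sinh s * (Q s)⁻¹
        + (c ^ 2 - 1) * Real.cosh s *
          (-(2 * c ^ 2 * Real.cosh s * Real.sinh s) / Q s ^ 2))
        - ((c * (c ^ 2 - 1) * Real.cosh s * Q s ^ (-(3:ℝ)/2)) * g s + v s * B s)) s := by
    intro s
    have he' : e = fun s => f s - v s * g s := funext he
    rw [he']
    exact (hfd s).sub ((hvd s).mul (hgd s))
  have hec : Continuous e := continuous_iff_continuousAt.2 fun s => (hed s).continuousAt
  -- positivity facts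
  have hBpos : ∀ t, t ≠ 0 → 0 < B t := by
    intro t ht
    rw [hB t]
    have h1 : Real.sinh t ≠ 0 := by simp [Real.sinh_eq_zero, ht]
    have h2 : (0:ℝ) < (c ^ 2 * Real.cosh t ^ 2 - 1) ^ (-(3:ℝ)/2) :=
      Real.rpow_pos_of_pos (hQpos t) _
    exact mul_pos (mul_pos hc0 (pow_two_pos_of_ne_zero h1)) h2
  have hBnonneg : ∀ t, 0 ≤ B t := by
    intro t
    rcases eq_or_ne t 0 with rfl | ht
    · rw [hB 0]; simp
    · exact (hBpos t ht).le
  have hgpos : ∀ s, 0 < s → 0 < g s := by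
    intro s hs
    exact intervalIntegral.intervalIntegral_pos_of_pos_on
      (hBc.intervalIntegrable _ _)
      (fun x hx => hBpos x (ne_of_gt hx.1)) hs
  have hvpos : ∀ s, 0 < s → 0 < v s := by
    intro s hs
    rw [hv s]
    have h1 : 0 < Real.sinh s := Real.sinh_pos_iff.2 hs
    have h2 : (0:ℝ) < (c ^ 2 * Real.cosh s ^ 2 - 1) ^ (-(1:ℝ)/2) :=
      Real.rpow_pos_of_pos (hQpos s) _
    exact mul_pos (mul_pos hc0 h1) h2
  -- derivative of e is negative on the positive axis
  have hederiv_neg : ∀ s, 0 < s → deriv e s < 0 := by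
    intro s hs
    rw [(hed s).deriv]
    have h1 : 0 < Real.sinh s := Real.sinh_pos_iff.2 hs
    have h2 : 0 < Real.cosh s := Real.cosh_pos s
    have hq := hQpos s
    have hq3 : (0:ℝ) < Q s ^ (-(3:ℝ)/2) := Real.rpow_pos_of_pos hq _
    have hfneg : (c ^ 2 - 1) * Real.sinh s * (Q s)⁻¹
        + (c ^ 2 - 1) * Real.cosh s *
          (-(2 * c ^ 2 * Real.cosh s * Real.sinh s) / Q s ^ 2) < 0 := by
      have hinv : (Q s)⁻¹ = Q s / Q s ^ 2 := by
        rw [eq_div_iff (pow_ne_zero 2 hq.ne')]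
        field_simp
      rw [hinv]
      have hcomb : (c ^ 2 - 1) * Real.sinh s * (Q s / Q s ^ 2)
          + (c ^ 2 - 1) * Real.cosh s *
            (-(2 * c ^ 2 * Real.cosh s * Real.sinh s) / Q s ^ 2)
          = ((c ^ 2 - 1) * Real.sinh s * Q s
              - 2 * c ^ 2 * (c ^ 2 - 1) * Real.cosh s ^ 2 * Real.sinh s) / Q s ^ 2 := by
        ring
      rw [hcomb]
      apply div_neg_of_neg_of_pos _ (by positivity)
      have hkey : 0 < (c ^ 2 - 1) * Real.sinh s * (c ^ 2 * Real.cosh s ^ 2 + 1) := by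
        have hcc : 0 < c ^ 2 - 1 := by nlinarith
        positivity
      simp only [hQ_def]
      nlinarith [hkey]
    have hterm2 : 0 < (c * (c ^ 2 - 1) * Real.cosh s * Q s ^ (-(3:ℝ)/2)) * g s
        + v s * B s := by
      have hg' := hgpos s hs
      have hv' := hvpos s hs
      have hB' := hBpos s (ne_of_gt hs)
      have hcc : 0 < c ^ 2 - 1 := by nlinarith
      have hA : 0 < c * (c ^ 2 - 1) * Real.cosh s * Q s ^ (-(3:ℝ)/2) := by positivity
      exact add_pos (mul_pos hA hg') (mul_pos hv' hB')
    linarith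
  -- e is strictly decreasing on [0, ∞)
  have hanti : StrictAntiOn e (Ici 0) :=
    strictAntiOn_of_deriv_neg (convex_Ici 0) hec.continuousOn
      (fun x hx => hederiv_neg x (by rwa [interior_Ici, mem_Ioi] at hx))
  -- e 0 = 1
  have he0 : e 0 = 1 := by
    rw [he 0, hv 0, hf 0]
    simp only [Real.sinh_zero, Real.cosh_zero, one_pow, mul_one, mul_zero, zero_mul,
      intervalIntegral.integral_same, sub_zero]
    rw [hsa]
    have : c ^ 2 - 1 ≠ 0 := by nlinarith
    field_simp
  -- evenness
  have heven : ∀ s, e (-s) = e s := by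
    intro s
    have hBev : ∀ x, B (-x) = B x := by
      intro x
      rw [hB, hB]
      simp [Real.cosh_neg, Real.sinh_neg]
    have hIneg : (∫ t in (0:ℝ)..(-s), B t) = - ∫ t in (0:ℝ)..s, B t := by
      have h1 : ∫ x in s..(0:ℝ), B (-x) = ∫ t in (0:ℝ)..(-s), B t := by
        rw [intervalIntegral.integral_comp_neg]
        norm_num
      rw [← h1]
      simp only [hBev]
      rw [intervalIntegral.integral_symm]
    rw [he (-s), he s, hf (-s), hf s, hv (-s), hv s, hIneg]
    simp only [Real.cosh_neg, Real.sinh_neg]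
    ring
  -- choose a point where e is negative
  set T : ℝ := Real.sinh 1 / Real.cosh 1 with hT_def
  have hT : 0 < T := div_pos (Real.sinh_pos_iff.2 one_pos) (Real.cosh_pos 1)
  have hg1 : 0 < g 1 := hgpos 1 one_pos
  set M : ℝ := (T * g 1)⁻¹ with hM_def
  have hM : 0 < M := by positivity
  set s₀ : ℝ := max 2 M with hs₀_def
  have hs₀2 : (2:ℝ) ≤ s₀ := le_max_left _ _
  have hs₀M : M ≤ s₀ := le_max_right _ _
  have hs₀pos : (0:ℝ) < s₀ := by linarith
  have hcosh_s₀ : M < Real.cosh s₀ := by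
    have h1 : s₀ ≤ Real.sinh s₀ := Real.self_le_sinh_iff.2 hs₀pos.le
    have h2 : Real.sinh s₀ < Real.cosh s₀ := Real.sinh_lt_cosh s₀
    linarith
  have hch := Real.cosh_pos s₀
  -- upper bound on f s₀
  have hfb : f s₀ ≤ (Real.cosh s₀)⁻¹ := by
    rw [hf s₀, hsa]
    have hone := Real.one_le_cosh s₀
    have h1 : (c ^ 2 - 1) * Real.cosh s₀ ^ 2 ≤ c ^ 2 * Real.cosh s₀ ^ 2 - 1 := by
      nlinarith
    have h2 : 0 < (c ^ 2 - 1) * Real.cosh s₀ ^ 2 := by nlinarith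
    calc (c ^ 2 - 1) * Real.cosh s₀ * (c ^ 2 * Real.cosh s₀ ^ 2 - 1)⁻¹
        ≤ (c ^ 2 - 1) * Real.cosh s₀ * ((c ^ 2 - 1) * Real.cosh s₀ ^ 2)⁻¹ := by
          apply mul_le_mul_of_nonneg_left (inv_anti₀ h2 h1) (by nlinarith)
      _ = (Real.cosh s₀)⁻¹ := by
          have : c ^ 2 - 1 ≠ 0 := by nlinarith
          field_simp
  -- lower bound on v s₀
  have hvb : T ≤ v s₀ := by
    rw [hv s₀]
    have hq := hQpos s₀
    simp only [hQ_def] at hq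
    have hrw : (c ^ 2 * Real.cosh s₀ ^ 2 - 1) ^ (-(1:ℝ)/2)
        = (Real.sqrt (c ^ 2 * Real.cosh s₀ ^ 2 - 1))⁻¹ := by
      rw [show (-(1:ℝ)/2) = -(1/2) by norm_num, Real.rpow_neg hq.le, ← Real.sqrt_eq_rpow]
    rw [hrw]
    have hsq_pos : 0 < Real.sqrt (c ^ 2 * Real.cosh s₀ ^ 2 - 1) := Real.sqrt_pos.2 hq
    have hsq_le : Real.sqrt (c ^ 2 * Real.cosh s₀ ^ 2 - 1) ≤ c * Real.cosh s₀ := by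
      have h1 : c ^ 2 * Real.cosh s₀ ^ 2 - 1 ≤ (c * Real.cosh s₀) ^ 2 := by nlinarith
      calc Real.sqrt (c ^ 2 * Real.cosh s₀ ^ 2 - 1)
          ≤ Real.sqrt ((c * Real.cosh s₀) ^ 2) := Real.sqrt_le_sqrt h1
        _ = c * Real.cosh s₀ := Real.sqrt_sq (by positivity)
    have hsh : 0 < Real.sinh s₀ := Real.sinh_pos_iff.2 hs₀pos
    have h3 : (c * Real.cosh s₀)⁻¹ ≤ (Real.sqrt (c ^ 2 * Real.cosh s₀ ^ 2 - 1))⁻¹ :=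
      inv_anti₀ hsq_pos hsq_le
    have h4 : c * Real.sinh s₀ * (c * Real.cosh s₀)⁻¹
        ≤ c * Real.sinh s₀ * (Real.sqrt (c ^ 2 * Real.cosh s₀ ^ 2 - 1))⁻¹ :=
      mul_le_mul_of_nonneg_left h3 (by positivity)
    have h5 : c * Real.sinh s₀ * (c * Real.cosh s₀)⁻¹ = Real.sinh s₀ / Real.cosh s₀ := by
      field_simp
    have h6 : T ≤ Real.sinh s₀ / Real.cosh s₀ := by
      rw [hT_def, div_le_div_iff₀ (Real.cosh_pos 1) hch]
      have h7 : 0 ≤ Real.sinh (s₀ - 1) := (Real.sinh_pos_iff.2 (by linarith)).le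
      rw [Real.sinh_sub] at h7
      linarith
    have h8 : Real.sinh s₀ / Real.cosh s₀ ≤ c * Real.sinh s₀ *
        (Real.sqrt (c ^ 2 * Real.cosh s₀ ^ 2 - 1))⁻¹ := by
      rw [← h5]; exact h4
    linarith [h6, h8]
  -- g s₀ ≥ g 1
  have hgb : g 1 ≤ g s₀ := by
    have hadd := intervalIntegral.integral_add_adjacent_intervals (μ := volume)
      (hBc.intervalIntegrable 0 1) (hBc.intervalIntegrable 1 s₀)
    have h2 : 0 ≤ ∫ t in (1:ℝ)..s₀, B t :=
      intervalIntegral.integral_nonneg (by linarith) (fun u _ => hBnonneg u)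
    simp only [hg_def]
    linarith [hadd]
  -- e s₀ < 0
  have hes₀ : e s₀ < 0 := by
    rw [he s₀]
    have h1 : T * g 1 ≤ v s₀ * g s₀ :=
      mul_le_mul hvb hgb hg1.le (le_trans hT.le hvb)
    have h2 : (Real.cosh s₀)⁻¹ < T * g 1 := by
      have h3 : (Real.cosh s₀)⁻¹ < M⁻¹ := inv_strictAnti₀ hM hcosh_s₀
      rwa [hM_def, inv_inv] at h3
    have h4 : (∫ t in (0:ℝ)..s₀, B t) = g s₀ := rfl
    rw [h4]
    linarith
  -- IVT gives the zero
  have hIVT := intermediate_value_Ioo' hs₀pos.le hec.continuousOn (a := 0) (b := s₀)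
  have h0mem : (0:ℝ) ∈ Ioo (e s₀) (e 0) := ⟨hes₀, by rw [he0]; norm_num⟩
  obtain ⟨z, hz, hez⟩ := hIVT h0mem
  refine ⟨heven, he0, z, hz.1, hez, ?_⟩
  intro s hs hes
  exact hanti.injOn (mem_Ici.2 hs.le) (mem_Ici.2 hz.1.le) (by rw [hes, hez])
end

section
/- For a > 0, define v(a,s) = cosh(a)·sinh(s)·(cosh²(a)·cosh²(s) − 1)^{−1/2}, B(a,t) = cosh(a)·sinh²(t)·(cosh²(a)·cosh²(t) − 1)^{−3/2}, f(a,s) = sinh²(a)·cosh(s)·(cosh²(a)·cosh²(s) − 1)^{−1}, e(a,s) = f(a,s) − v(a,s)·∫₀^s B(a,t) dt, and E(a) = ∫₀^∞ B(a,t) dt. Let z(a) be the unique zero of e(a,·) in (0,∞). Then: (1) the integral E(a) converges and 0 < E(a) < ∞; (2) the function w(s) = e(a,s) − E(a)·v(a,s) has exactly one zero ℓ(a) in (0, ∞), and ℓ(a) ∈ (0, z(a)); (3) for every α with 0 < α < ℓ(a), the function s ↦ v(a,α)·e(a,s) + e(a,α)·v(a,s) has no zero in (0, ∞); (4) for every α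 > ℓ(a), this function has exactly one zero β(α) in (0, ∞). -/
open Real MeasureTheory Set Filter Topology

noncomputable def DD (a s : ℝ) : ℝ := Real.cosh a ^ 2 * Real.cosh s ^ 2 - 1

noncomputable def Bf (a t : ℝ) : ℝ :=
  Real.cosh a * Real.sinh t ^ 2 * DD a t ^ (-(3:ℝ)/2)

noncomputable def qq (a s : ℝ) : ℝ :=
  Real.sinh a ^ 2 / Real.cosh a * (Real.cosh s / Real.sinh s) * DD a s ^ (-(1:ℝ)/2)

noncomputable def II (a s : ℝ) : ℝ := ∫ t in (0:ℝ)..s, Bf a t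

noncomputable def gg (a s : ℝ) : ℝ := qq a s - II a s

variable {a : ℝ}

lemma DD_pos (ha : 0 < a) (s : ℝ) : 0 < DD a s := by
  have h1 : 1 < Real.cosh a := Real.one_lt_cosh.mpr ha.ne'
  have h2 : 1 ≤ Real.cosh s := Real.one_le_cosh s
  have h1' : 1 < Real.cosh a ^ 2 := by nlinarith
  have h2' : 1 ≤ Real.cosh s ^ 2 := by nlinarith
  unfold DD; nlinarith

lemma DD_ge (ha : 0 < a) (s : ℝ) :
    Real.sinh a ^ 2 * Real.cosh s ^ 2 ≤ DD a s := by
  have h2 : 1 ≤ Real.cosh s := Real.one_le_cosh s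
  have h3 : Real.cosh a ^ 2 = Real.sinh a ^ 2 + 1 := Real.cosh_sq a
  unfold DD; nlinarith

lemma Bf_nonneg (ha : 0 < a) (t : ℝ) : 0 ≤ Bf a t := by
  have h1 := Real.rpow_pos_of_pos (DD_pos ha t) (-(3:ℝ)/2)
  have h2 := Real.cosh_pos a
  unfold Bf; positivity

lemma Bf_pos (ha : 0 < a) {t : ℝ} (ht : t ≠ 0) : 0 < Bf a t := by
  have h1 := Real.rpow_pos_of_pos (DD_pos ha t) (-(3:ℝ)/2)
  have h2 := Real.cosh_pos a
  have h3 : Real.sinh t ≠ 0 := by simpa [Real.sinh_eq_zero] using ht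
  have h4 : 0 < Real.sinh t ^ 2 := by positivity
  unfold Bf; positivity

lemma DD_cont : Continuous (DD a) := by
  unfold DD; continuity

lemma Bf_cont (ha : 0 < a) : Continuous (Bf a) := by
  unfold Bf
  exact ((continuous_const.mul ((Real.continuous_sinh).pow 2)).mul
    (DD_cont.rpow_const fun x => Or.inl (DD_pos ha x).ne'))

lemma Bf_le (ha : 0 < a) {t : ℝ} (ht : 0 ≤ t) :
    Bf a t ≤ 2 * Real.cosh a / Real.sinh a ^ 3 * Real.exp (-t) := by
  have hsa : 0 < Real.sinh a := Real.sinh_pos_iff.mpr ha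
  have hC : 0 < Real.cosh t := Real.cosh_pos t
  have hca : 0 < Real.cosh a := Real.cosh_pos a
  have hprod : (0:ℝ) < Real.sinh a ^ 2 * Real.cosh t ^ 2 := by positivity
  have h1 : DD a t ^ (-(3:ℝ)/2) ≤ (Real.sinh a ^ 2 * Real.cosh t ^ 2) ^ (-(3:ℝ)/2) :=
    Real.rpow_le_rpow_of_nonpos hprod (DD_ge ha t) (by norm_num)
  have h2 : (Real.sinh a ^ 2 * Real.cosh t ^ 2) ^ (-(3:ℝ)/2)
      = (Real.sinh a * Real.cosh t)⁻¹ ^ 3 := by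
    have hx : (0:ℝ) ≤ Real.sinh a * Real.cosh t := by positivity
    rw [show Real.sinh a ^ 2 * Real.cosh t ^ 2 = (Real.sinh a * Real.cosh t) ^ 2 by ring,
      ← Real.rpow_natCast (Real.sinh a * Real.cosh t) 2, ← Real.rpow_mul hx]
    rw [show ((2:ℕ):ℝ) * (-(3:ℝ)/2) = -((3:ℕ):ℝ) by norm_num]
    rw [Real.rpow_neg hx, Real.rpow_natCast, inv_pow]
  have hS : 0 ≤ Real.sinh t := Real.sinh_nonneg_iff.mpr ht
  have hSC : Real.sinh t ≤ Real.cosh t := (Real.sinh_lt_cosh t).le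
  have h3 : Bf a t ≤ Real.cosh a * Real.sinh t ^ 2 * (Real.sinh a * Real.cosh t)⁻¹ ^ 3 := by
    unfold Bf
    rw [← h2]
    have : (0:ℝ) ≤ Real.cosh a * Real.sinh t ^ 2 := by positivity
    exact mul_le_mul_of_nonneg_left h1 this
  have h4 : Real.cosh a * Real.sinh t ^ 2 * (Real.sinh a * Real.cosh t)⁻¹ ^ 3
      ≤ Real.cosh a / (Real.sinh a ^ 3 * Real.cosh t) := by
    rw [inv_pow, ← div_eq_mul_inv, div_le_div_iff₀ (by positivity) (by positivity)]
    have hS2C2 : Real.sinh t ^ 2 ≤ Real.cosh t ^ 2 := by nlinarith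
    nlinarith [mul_le_mul_of_nonneg_left hS2C2
      (show (0:ℝ) ≤ Real.cosh a * Real.sinh a ^ 3 * Real.cosh t by positivity)]
  have h5 : (Real.cosh t)⁻¹ ≤ 2 * Real.exp (-t) := by
    rw [inv_le_comm₀ hC (by positivity)]
    rw [Real.exp_neg, mul_inv, inv_inv, Real.cosh_eq]
    have := Real.exp_pos (-t)
    rw [Real.exp_neg] at this
    have h2e := Real.exp_pos t
    nlinarith [Real.exp_pos (-t), Real.exp_neg t]
  calc Bf a t ≤ Real.cosh a / (Real.sinh a ^ 3 * Real.cosh t) := h3.trans h4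
    _ = Real.cosh a / Real.sinh a ^ 3 * (Real.cosh t)⁻¹ := by
        rw [div_eq_mul_inv, mul_inv, div_eq_mul_inv]; ring
    _ ≤ Real.cosh a / Real.sinh a ^ 3 * (2 * Real.exp (-t)) :=
        mul_le_mul_of_nonneg_left h5 (by positivity)
    _ = 2 * Real.cosh a / Real.sinh a ^ 3 * Real.exp (-t) := by ring

lemma Bf_int (ha : 0 < a) : IntegrableOn (Bf a) (Set.Ioi 0) := by
  have hint : IntegrableOn (fun t => 2 * Real.cosh a / Real.sinh a ^ 3 * Real.exp (-1 * t))
      (Set.Ioi (0:ℝ)) := (exp_neg_integrableOn_Ioi 0 one_pos).const_mul _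
  apply hint.mono' ((Bf_cont ha).aestronglyMeasurable.restrict)
  filter_upwards [ae_restrict_mem measurableSet_Ioi] with t ht
  rw [Real.norm_eq_abs, abs_of_nonneg (Bf_nonneg ha t)]
  simpa using Bf_le ha (le_of_lt ht)

lemma E_pos (ha : 0 < a) : 0 < ∫ t in Set.Ioi (0:ℝ), Bf a t := by
  rw [setIntegral_pos_iff_support_of_nonneg_ae
    (Filter.Eventually.of_forall fun t => Bf_nonneg ha t) (Bf_int ha)]
  have hsub : Set.Ioi (0:ℝ) ⊆ Function.support (Bf a) ∩ Set.Ioi 0 := fun t ht =>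
    ⟨(Bf_pos ha (ne_of_gt ht)).ne', ht⟩
  calc (0:ENNReal) < volume (Set.Ioi (0:ℝ)) := by simp
    _ ≤ volume (Function.support (Bf a) ∩ Set.Ioi 0) := measure_mono hsub

lemma II_hasDeriv (ha : 0 < a) (s : ℝ) : HasDerivAt (II a) (Bf a s) s :=
  intervalIntegral.integral_hasDerivAt_right
    ((Bf_cont ha).intervalIntegrable _ _)
    ((Bf_cont ha).stronglyMeasurable.stronglyMeasurableAtFilter)
    (Bf_cont ha).continuousAt

lemma II_le_E (ha : 0 < a) {s : ℝ} (hs : 0 < s) :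
    II a s ≤ ∫ t in Set.Ioi (0:ℝ), Bf a t := by
  unfold II
  rw [intervalIntegral.integral_of_le hs.le]
  exact setIntegral_mono_set (Bf_int ha)
    (Filter.Eventually.of_forall fun t => Bf_nonneg ha t)
    (Filter.Eventually.of_forall fun t ht => Set.Ioc_subset_Ioi_self ht)

lemma qq_pos (ha : 0 < a) {s : ℝ} (hs : 0 < s) : 0 < qq a s := by
  have h1 := Real.rpow_pos_of_pos (DD_pos ha s) (-(1:ℝ)/2)
  have h2 := Real.cosh_pos a
  have h3 := Real.cosh_pos s
  have h4 : 0 < Real.sinh s := Real.sinh_pos_iff.mpr hs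
  have h5 : 0 < Real.sinh a := Real.sinh_pos_iff.mpr ha
  unfold qq; positivity

lemma gg_add_E_pos (ha : 0 < a) {s : ℝ} (hs : 0 < s) :
    0 < gg a s + ∫ t in Set.Ioi (0:ℝ), Bf a t := by
  have h1 := II_le_E ha hs
  have h2 := qq_pos ha hs
  unfold gg; linarith

lemma qq_hasDeriv (ha : 0 < a) {s : ℝ} (hs : s ≠ 0) :
    ∃ q' : ℝ, q' < 0 ∧ HasDerivAt (qq a) q' s := by
  have hS : Real.sinh s ≠ 0 := by simpa [Real.sinh_eq_zero] using hs
  have hD := DD_pos ha s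
  have h1 : HasDerivAt (fun u => Real.cosh u / Real.sinh u)
      ((Real.sinh s * Real.sinh s - Real.cosh s * Real.cosh s) / Real.sinh s ^ 2) s :=
    (Real.hasDerivAt_cosh s).div (Real.hasDerivAt_sinh s) hS
  have hDd : HasDerivAt (DD a) (Real.cosh a ^ 2 * (2 * Real.cosh s ^ 1 * Real.sinh s)) s := by
    have h0 : HasDerivAt (fun u => Real.cosh u ^ 2) ((2:ℕ) * Real.cosh s ^ 1 * Real.sinh s) s :=
      (Real.hasDerivAt_cosh s).pow 2
    have := (h0.const_mul (Real.cosh a ^ 2)).sub_const 1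
    exact this.congr_deriv (by push_cast; ring)
  have h2 : HasDerivAt (fun u => DD a u ^ (-(1:ℝ)/2))
      (Real.cosh a ^ 2 * (2 * Real.cosh s ^ 1 * Real.sinh s) * (-(1:ℝ)/2)
        * DD a s ^ (-(1:ℝ)/2 - 1)) s :=
    hDd.rpow_const (Or.inl hD.ne')
  have h3 := (h1.mul h2).const_mul (Real.sinh a ^ 2 / Real.cosh a)
  have heq : qq a = fun y => Real.sinh a ^ 2 / Real.cosh a *
      (Real.cosh y / Real.sinh y * DD a y ^ (-(1:ℝ)/2)) := by
    funext y; unfold qq; ring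
  simp only [Pi.mul_apply] at h3
  rw [← heq] at h3
  refine ⟨_, ?_, h3⟩
  have hca := Real.cosh_pos a
  have hcs := Real.cosh_pos s
  have hsa : 0 < Real.sinh a := Real.sinh_pos_iff.mpr ha
  have hS2 : 0 < Real.sinh s ^ 2 := by positivity
  have hr1 : 0 < DD a s ^ (-(1:ℝ)/2) := Real.rpow_pos_of_pos hD _
  have hr2 : 0 < DD a s ^ (-(1:ℝ)/2 - 1) := Real.rpow_pos_of_pos hD _
  have hfrac : (Real.sinh s * Real.sinh s - Real.cosh s * Real.cosh s) / Real.sinh s ^ 2 < 0 := by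
    apply div_neg_of_neg_of_pos _ hS2
    nlinarith [Real.cosh_sq s]
  have hterm1 : (Real.sinh s * Real.sinh s - Real.cosh s * Real.cosh s) / Real.sinh s ^ 2
      * DD a s ^ (-(1:ℝ)/2) < 0 := mul_neg_of_neg_of_pos hfrac hr1
  have hterm2 : Real.cosh s / Real.sinh s *
      (Real.cosh a ^ 2 * (2 * Real.cosh s ^ 1 * Real.sinh s) * (-(1:ℝ)/2)
        * DD a s ^ (-(1:ℝ)/2 - 1)) < 0 := by
    rcases lt_or_gt_of_ne hs with hneg | hpos
    · have hSneg : Real.sinh s < 0 := Real.sinh_neg_iff.mpr hneg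
      apply mul_neg_of_neg_of_pos (div_neg_of_pos_of_neg hcs hSneg)
      have hin : 0 < Real.cosh a ^ 2 * (2 * Real.cosh s ^ 1 * Real.sinh s) * (-(1:ℝ)/2) := by
        nlinarith [mul_pos (pow_pos hca 2) hcs]
      exact mul_pos hin hr2
    · have hSpos : 0 < Real.sinh s := Real.sinh_pos_iff.mpr hpos
      apply mul_neg_of_pos_of_neg (by positivity)
      have hin : Real.cosh a ^ 2 * (2 * Real.cosh s ^ 1 * Real.sinh s) * (-(1:ℝ)/2) < 0 := by
        nlinarith [mul_pos (pow_pos hca 2) hcs]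
      exact mul_neg_of_neg_of_pos hin hr2
  exact mul_neg_of_pos_of_neg (by positivity) (by linarith)

lemma gg_hasDeriv (ha : 0 < a) {s : ℝ} (hs : s ≠ 0) :
    ∃ g' : ℝ, g' < 0 ∧ HasDerivAt (gg a) g' s := by
  obtain ⟨q', hq', hq⟩ := qq_hasDeriv ha hs
  refine ⟨q' - Bf a s, ?_, hq.sub (II_hasDeriv ha s)⟩
  have := Bf_nonneg ha s
  linarith

lemma gg_anti (ha : 0 < a) : StrictAntiOn (gg a) (Set.Ioi 0) := by
  apply strictAntiOn_of_deriv_neg (convex_Ioi 0)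
  · intro x hx
    obtain ⟨g', _, hg⟩ := gg_hasDeriv ha (ne_of_gt hx)
    exact hg.continuousAt.continuousWithinAt
  · intro x hx
    rw [interior_Ioi] at hx
    obtain ⟨g', hg', hg⟩ := gg_hasDeriv ha (ne_of_gt hx)
    rw [hg.deriv]; exact hg'

lemma gg_contOn (ha : 0 < a) {x y : ℝ} (hx : 0 < x) :
    ContinuousOn (gg a) (Set.Icc x y) := by
  intro u hu
  obtain ⟨g', _, hg⟩ := gg_hasDeriv ha (ne_of_gt (lt_of_lt_of_le hx hu.1))
  exact hg.continuousAt.continuousWithinAt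

lemma gg_top (ha : 0 < a) : Tendsto (gg a) (𝓝[>] (0:ℝ)) atTop := by
  have hsa : 0 < Real.sinh a := Real.sinh_pos_iff.mpr ha
  have hca : 0 < Real.cosh a := Real.cosh_pos a
  have hF : Tendsto (fun s => Real.sinh a ^ 2 / Real.cosh a * Real.cosh s * DD a s ^ (-(1:ℝ)/2))
      (𝓝[>] (0:ℝ)) (𝓝 (Real.sinh a ^ 2 / Real.cosh a * Real.cosh 0 * DD a 0 ^ (-(1:ℝ)/2))) :=
    (((continuous_const.mul Real.continuous_cosh).mul
      (DD_cont.rpow_const fun x => Or.inl (DD_pos ha x).ne')).continuousAt.tendsto).mono_left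
      nhdsWithin_le_nhds
  have hLpos : 0 < Real.sinh a ^ 2 / Real.cosh a * Real.cosh 0 * DD a 0 ^ (-(1:ℝ)/2) := by
    have h1 := Real.rpow_pos_of_pos (DD_pos ha 0) (-(1:ℝ)/2)
    have h2 := Real.cosh_pos (0:ℝ)
    positivity
  have hsinh : Tendsto (fun s : ℝ => Real.sinh s) (𝓝[>] (0:ℝ)) (𝓝[>] (0:ℝ)) := by
    rw [tendsto_nhdsWithin_iff]
    constructor
    · have h0 := Real.continuous_sinh.continuousAt (x := (0:ℝ))
      rw [ContinuousAt, Real.sinh_zero] at h0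
      exact h0.mono_left nhdsWithin_le_nhds
    · exact eventually_nhdsWithin_of_forall fun x hx => Real.sinh_pos_iff.mpr hx
  have hG : Tendsto (fun s : ℝ => (Real.sinh s)⁻¹) (𝓝[>] (0:ℝ)) atTop :=
    tendsto_inv_nhdsGT_zero.comp hsinh
  have hq : Tendsto (qq a) (𝓝[>] (0:ℝ)) atTop := by
    apply (Tendsto.pos_mul_atTop hLpos hF hG).congr'
    filter_upwards [self_mem_nhdsWithin] with s (hs : 0 < s)
    have hS : Real.sinh s ≠ 0 := ne_of_gt (Real.sinh_pos_iff.mpr hs)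
    unfold qq
    field_simp
  apply tendsto_atTop_mono' _ _
    (tendsto_atTop_add_const_right _ (-(∫ t in Set.Ioi (0:ℝ), Bf a t)) hq)
  filter_upwards [self_mem_nhdsWithin] with s (hs : 0 < s)
  have := II_le_E ha hs
  unfold gg; linarith

lemma gg_bot (ha : 0 < a) :
    Tendsto (gg a) atTop (𝓝 (-(∫ t in Set.Ioi (0:ℝ), Bf a t))) := by
  have hI : Tendsto (II a) atTop (𝓝 (∫ t in Set.Ioi (0:ℝ), Bf a t)) :=
    intervalIntegral_tendsto_integral_Ioi 0 (Bf_int ha) tendsto_id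
  have hDtop : Tendsto (fun s => DD a s) atTop atTop := by
    apply tendsto_atTop_mono' atTop _ tendsto_id
    filter_upwards [eventually_ge_atTop (1:ℝ)] with s hs1
    have h1 : 1 ≤ Real.cosh a ^ 2 := by nlinarith [Real.one_le_cosh a]
    have h2 : 1 ≤ Real.cosh s := Real.one_le_cosh s
    have hcsq := Real.cosh_sq s
    have h3 : s < Real.sinh s := Real.self_lt_sinh_iff.mpr (by linarith)
    show id s ≤ DD a s
    unfold DD
    simp only [id]
    nlinarith [sq_nonneg (Real.cosh s)]
  have hrpow : Tendsto (fun s => DD a s ^ (-(1:ℝ)/2)) atTop (𝓝 0) := by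
    have := (tendsto_rpow_neg_atTop (by norm_num : (0:ℝ) < 1/2)).comp hDtop
    simpa [Function.comp_def, neg_div] using this
  have hq0 : Tendsto (qq a) atTop (𝓝 0) := by
    have hub : ∀ᶠ s in atTop, qq a s ≤
        Real.sinh a ^ 2 / Real.cosh a * 2 * DD a s ^ (-(1:ℝ)/2) := by
      filter_upwards [eventually_ge_atTop (1:ℝ)] with s hs1
      have h1 : (1:ℝ) < Real.sinh 1 := Real.self_lt_sinh_iff.mpr one_pos
      have h2 : Real.sinh 1 ≤ Real.sinh s := Real.sinh_le_sinh.mpr hs1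
      have hSpos : (0:ℝ) < Real.sinh s := by linarith
      have hCS : Real.cosh s / Real.sinh s ≤ 2 := by
        rw [div_le_iff₀ hSpos]
        have h3 : Real.cosh s - Real.sinh s = Real.exp (-s) := Real.cosh_sub_sinh s
        have h4 : Real.exp (-s) ≤ 1 := Real.exp_le_one_iff.mpr (by linarith)
        linarith
      have hr := (Real.rpow_pos_of_pos (DD_pos ha s) (-(1:ℝ)/2)).le
      unfold qq
      apply mul_le_mul_of_nonneg_right _ hr
      apply mul_le_mul_of_nonneg_left hCS (by positivity)
    have hlb : ∀ᶠ s in atTop, (0:ℝ) ≤ qq a s := by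
      filter_upwards [eventually_gt_atTop (0:ℝ)] with s hs
      exact (qq_pos ha hs).le
    have hub0 : Tendsto (fun s => Real.sinh a ^ 2 / Real.cosh a * 2 * DD a s ^ (-(1:ℝ)/2))
        atTop (𝓝 0) := by
      have := hrpow.const_mul (Real.sinh a ^ 2 / Real.cosh a * 2)
      simpa using this
    exact tendsto_of_tendsto_of_tendsto_of_le_of_le' tendsto_const_nhds hub0 hlb hub
  have := hq0.sub hI
  rw [zero_sub] at this
  exact this

/-- Catenoids in `ℍ² × ℝ` do not satisfy Lindelöf's property: with
`E(a) = ∫₀^∞ B(a,t) dt ∈ (0,∞)`, the Jacobi field `w = e − E·v` has a unique zero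
`ℓ(a) ∈ (0, z(a))`; for `0 < α < ℓ(a)` the field `v(α)e + e(α)v` has no zero in `(0,∞)`,
and for `α > ℓ(a)` it has exactly one. -/
theorem stmt11 (a : ℝ) (ha : 0 < a)
    (v B f e : ℝ → ℝ)
    (hv : ∀ s, v s = Real.cosh a * Real.sinh s *
      (Real.cosh a ^ 2 * Real.cosh s ^ 2 - 1) ^ (-(1:ℝ)/2))
    (hB : ∀ t, B t = Real.cosh a * Real.sinh t ^ 2 *
      (Real.cosh a ^ 2 * Real.cosh t ^ 2 - 1) ^ (-(3:ℝ)/2))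
    (hf : ∀ s, f s = Real.sinh a ^ 2 * Real.cosh s *
      (Real.cosh a ^ 2 * Real.cosh s ^ 2 - 1)⁻¹)
    (he : ∀ s, e s = f s - v s * ∫ t in (0:ℝ)..s, B t)
    (E : ℝ) (hE : E = ∫ t in Set.Ioi (0:ℝ), B t)
    (z : ℝ) (hz : 0 < z) (hze : e z = 0)
    (hzuniq : ∀ s, 0 < s → e s = 0 → s = z) :
    (MeasureTheory.IntegrableOn B (Set.Ioi 0) ∧ 0 < E) ∧
    ∃ ℓ : ℝ, 0 < ℓ ∧ ℓ < z ∧ e ℓ - E * v ℓ = 0 ∧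
      (∀ s, 0 < s → e s - E * v s = 0 → s = ℓ) ∧
      (∀ α : ℝ, 0 < α → α < ℓ → ∀ s, 0 < s → v α * e s + e α * v s ≠ 0) ∧
      (∀ α : ℝ, ℓ < α → ∃ β : ℝ, 0 < β ∧ v α * e β + e α * v β = 0 ∧
        ∀ s, 0 < s → v α * e s + e α * v s = 0 → s = β) := by
  have hBf : B = Bf a := funext fun t => by rw [hB t]; simp [Bf, DD]
  have hEv : E = ∫ t in Set.Ioi (0:ℝ), Bf a t := by rw [hE, hBf]
  have hEpos : 0 < E := hEv ▸ E_pos ha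
  have hvpos : ∀ s, 0 < s → 0 < v s := by
    intro s hs
    rw [hv s]
    have h1 : 0 < Real.sinh s := Real.sinh_pos_iff.mpr hs
    have h2 := Real.cosh_pos a
    have h3 : 0 < (Real.cosh a ^ 2 * Real.cosh s ^ 2 - 1) ^ (-(1:ℝ)/2) :=
      Real.rpow_pos_of_pos (DD_pos ha s) _
    positivity
  have hev : ∀ s, 0 < s → e s = v s * gg a s := by
    intro s hs
    have hSpos : 0 < Real.sinh s := Real.sinh_pos_iff.mpr hs
    have hS : Real.sinh s ≠ 0 := ne_of_gt hSpos
    have hca : Real.cosh a ≠ 0 := (Real.cosh_pos a).ne'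
    have hD := DD_pos ha s
    have hDhalf : DD a s ^ (-(1:ℝ)/2) * DD a s ^ (-(1:ℝ)/2) = (DD a s)⁻¹ := by
      rw [← Real.rpow_add hD, show (-(1:ℝ)/2 + -(1:ℝ)/2) = -1 by norm_num, Real.rpow_neg_one]
    have hvq : Real.cosh a * Real.sinh s * DD a s ^ (-(1:ℝ)/2) * qq a s
        = Real.sinh a ^ 2 * Real.cosh s * (DD a s)⁻¹ := by
      unfold qq
      rw [← hDhalf]
      field_simp
    rw [he s, hf s, hv s, hBf]
    show Real.sinh a ^ 2 * Real.cosh s * (DD a s)⁻¹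
        - Real.cosh a * Real.sinh s * DD a s ^ (-(1:ℝ)/2) * II a s
        = Real.cosh a * Real.sinh s * DD a s ^ (-(1:ℝ)/2) * gg a s
    unfold gg
    rw [mul_sub, hvq]
  refine ⟨⟨hBf ▸ Bf_int ha, hEpos⟩, ?_⟩
  have hgz : gg a z = 0 := by
    have h0 := hze
    rw [hev z hz] at h0
    exact (mul_eq_zero.mp h0).resolve_left (hvpos z hz).ne'
  have h1 : ∀ᶠ s in 𝓝[>] (0:ℝ), E < gg a s := (gg_top ha).eventually (eventually_gt_atTop E)
  have h2 : ∀ᶠ s in 𝓝[>] (0:ℝ), s < z :=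
    mem_nhdsWithin_of_mem_nhds (Iio_mem_nhds hz)
  obtain ⟨s₁, hs₁E, hs₁0, hs₁z⟩ :=
    (h1.and ((eventually_mem_nhdsWithin (s := Set.Ioi (0:ℝ))).and h2)).exists
  have hs₁0' : (0:ℝ) < s₁ := hs₁0
  obtain ⟨ℓ, hℓmem, hℓE⟩ := intermediate_value_Ioo' (le_of_lt hs₁z) (gg_contOn ha hs₁0')
    (Set.mem_Ioo.mpr ⟨hgz ▸ hEpos, hs₁E⟩)
  have hℓ0 : 0 < ℓ := lt_trans hs₁0' hℓmem.1
  refine ⟨ℓ, hℓ0, hℓmem.2, ?_, ?_, ?_, ?_⟩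
  · rw [hev ℓ hℓ0, hℓE]; ring
  · intro s hs hsz
    rw [hev s hs] at hsz
    have h0 : v s * (gg a s - E) = 0 := by linear_combination hsz
    have hgs : gg a s = E := by
      rcases mul_eq_zero.mp h0 with h | h
      · exact absurd h (hvpos s hs).ne'
      · linarith
    exact (gg_anti ha).injOn (Set.mem_Ioi.mpr hs) (Set.mem_Ioi.mpr hℓ0) (hgs.trans hℓE.symm)
  · intro α hα hαℓ s hs
    have hgα : E < gg a α := by
      have := gg_anti ha (Set.mem_Ioi.mpr hα) (Set.mem_Ioi.mpr hℓ0) hαℓ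
      rw [hℓE] at this; exact this
    have hpos : 0 < gg a s + gg a α := by
      have h0 := gg_add_E_pos ha hs
      rw [← hEv] at h0
      linarith
    rw [hev s hs, hev α hα]
    intro hcontra
    have h0 : v α * v s * (gg a s + gg a α) = 0 := by linear_combination hcontra
    exact absurd h0 (ne_of_gt (mul_pos (mul_pos (hvpos α hα) (hvpos s hs)) hpos))
  · intro α hαℓ
    have hα : 0 < α := lt_trans hℓ0 hαℓ
    have hgαE : gg a α < E := by
      have := gg_anti ha (Set.mem_Ioi.mpr hℓ0) (Set.mem_Ioi.mpr hα) hαℓ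
      rw [hℓE] at this; exact this
    have hbot := gg_bot ha
    rw [← hEv] at hbot
    have h3 : ∀ᶠ s in atTop, gg a s < -gg a α :=
      hbot.eventually_lt_const (by linarith)
    obtain ⟨s₂, hs₂lt, hs₂0⟩ := (h3.and (eventually_gt_atTop 0)).exists
    have h4 : ∀ᶠ s in 𝓝[>] (0:ℝ), -gg a α < gg a s :=
      (gg_top ha).eventually (eventually_gt_atTop _)
    have h5 : ∀ᶠ s in 𝓝[>] (0:ℝ), s < s₂ :=
      mem_nhdsWithin_of_mem_nhds (Iio_mem_nhds hs₂0)
    obtain ⟨s₃, h₃gt, h₃0, h₃lt⟩ :=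
      (h4.and ((eventually_mem_nhdsWithin (s := Set.Ioi (0:ℝ))).and h5)).exists
    have h₃0' : (0:ℝ) < s₃ := h₃0
    obtain ⟨β, hβmem, hβval⟩ := intermediate_value_Ioo' (le_of_lt h₃lt) (gg_contOn ha h₃0')
      (Set.mem_Ioo.mpr ⟨hs₂lt, h₃gt⟩)
    have hβ0 : 0 < β := lt_trans h₃0' hβmem.1
    refine ⟨β, hβ0, ?_, ?_⟩
    · rw [hev β hβ0, hev α hα, hβval]; ring
    · intro s hs hval
      rw [hev s hs, hev α hα] at hval
      have h0 : v α * v s * (gg a s + gg a α) = 0 := by linear_combination hval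
      have hne : v α * v s ≠ 0 := (mul_pos (hvpos α hα) (hvpos s hs)).ne'
      have hgs : gg a s = -gg a α := by
        rcases mul_eq_zero.mp h0 with h | h
        · exact absurd h hne
        · linarith
      exact (gg_anti ha).injOn (Set.mem_Ioi.mpr hs) (Set.mem_Ioi.mpr hβ0)
        (hgs.trans hβval.symm)
end

section
/- For a > 0, define for s, t ∈ ℝ: I₀(a,t) = [cosh(2a)·(3 − cosh²(2a))·cosh²(2t) + (cosh²(2a) − 1)·cosh(2t) − 2·cosh(2a)] / [(cosh(2a)·cosh(2t) + 1)²·(cosh(2a)·cosh(2t) − 1)^{3/2}], v₀(a,s) = cosh(2a)·sinh(2s)·(cosh(2a)·cosh(2s) − 1)^{−1/2}, f₀(a,s) = sinh²(2a)·cosh(2s)·(cosh²(2a)·cosh²(2s) − 1)^{−1}, and e₀(a,s) = f₀(a,s) − v₀(a,s)·∫₀^s I₀(a,t) dt. Then: (1) the integral E₀(a) = ∫₀^∞ I₀(a,t) dt converges; (2) if E₀(a) ≤ 0, then e₀(a,s) > 0 for every s ∈ ℝ; (3) if E₀(a) > 0, then e₀(a,·) has exactly one zero z(a) in (0, ∞)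 (and, being even, exactly the two zeros ±z(a) in ℝ). -/
open Real MeasureTheory Set Filter Topology

set_option maxHeartbeats 1000000

lemma algebra_key (c X S r : ℝ) (hr : r ≠ 0) (hS : S ≠ 0) (hc : c ≠ 0)
    (hu : c*X - 1 ≠ 0) (hp : c*X + 1 ≠ 0) (hq : c^2*X^2 - 1 ≠ 0)
    (hr2 : r * r = c*X - 1) (hS2 : S^2 = X^2 - 1) :
    ((c^2-1)*(2*S)*r + (c^2-1)*X*(c*(2*S)/(2*r))) * (c*S*(c^2*X^2-1))
     - ((c^2-1)*X*r) * ((c*(2*X))*(c^2*X^2-1) + (c*S)*(c^2*(2*X*(2*S))))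
    = ((c*(3-c^2)*X^2 + (c^2-1)*X - 2*c) / ((c*X+1)^2*((c*X-1)*r)) - 2*r/(c*S^2))
      * (c*S*(c^2*X^2-1))^2 := by
  field_simp
  rw [show r^2 = c*X - 1 by rw [sq]; exact hr2, hS2]
  ring

lemma cat_hasDerivAt (c : ℝ) (hc : 1 < c) (s : ℝ) (hs : 0 < s) :
    HasDerivAt (fun s : ℝ => (c^2 - 1) * Real.cosh (2*s) * Real.sqrt (c * Real.cosh (2*s) - 1)
        / (c * Real.sinh (2*s) * (c^2 * Real.cosh (2*s)^2 - 1)))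
      ((c * (3 - c^2) * Real.cosh (2*s)^2 + (c^2-1) * Real.cosh (2*s) - 2*c)
        / ((c * Real.cosh (2*s) + 1)^2 * ((c * Real.cosh (2*s) - 1) * Real.sqrt (c * Real.cosh (2*s) - 1)))
       - 2 * Real.sqrt (c * Real.cosh (2*s) - 1) / (c * Real.sinh (2*s)^2)) s := by
  have hX1 : 1 ≤ Real.cosh (2*s) := Real.one_le_cosh _
  have hu : 0 < c * Real.cosh (2*s) - 1 := by nlinarith
  have hS : 0 < Real.sinh (2*s) := Real.sinh_pos_iff.2 (by linarith)
  have hq : 0 < c^2 * Real.cosh (2*s)^2 - 1 := by nlinarith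
  have hr : 0 < Real.sqrt (c * Real.cosh (2*s) - 1) := Real.sqrt_pos.2 hu
  have hr2 : Real.sqrt (c * Real.cosh (2*s) - 1) * Real.sqrt (c * Real.cosh (2*s) - 1)
      = c * Real.cosh (2*s) - 1 := Real.mul_self_sqrt hu.le
  have hS2 : Real.sinh (2*s)^2 = Real.cosh (2*s)^2 - 1 := Real.sinh_sq _
  have h2 : HasDerivAt (fun s : ℝ => 2*s) 2 s := by
    simpa using (hasDerivAt_id s).const_mul 2
  have hX : HasDerivAt (fun s : ℝ => Real.cosh (2*s)) (Real.sinh (2*s) * 2) s := h2.cosh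
  have hSd : HasDerivAt (fun s : ℝ => Real.sinh (2*s)) (Real.cosh (2*s) * 2) s := h2.sinh
  have hu' : HasDerivAt (fun s : ℝ => c * Real.cosh (2*s) - 1) (c * (Real.sinh (2*s) * 2)) s :=
    (hX.const_mul c).sub_const 1
  have hrd : HasDerivAt (fun s : ℝ => Real.sqrt (c * Real.cosh (2*s) - 1))
      (c * (Real.sinh (2*s) * 2) / (2 * Real.sqrt (c * Real.cosh (2*s) - 1))) s :=
    hu'.sqrt hu.ne'
  have hA : HasDerivAt (fun s : ℝ => (c^2 - 1) * Real.cosh (2*s) * Real.sqrt (c * Real.cosh (2*s) - 1))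
      (((c^2-1) * (Real.sinh (2*s) * 2)) * Real.sqrt (c * Real.cosh (2*s) - 1)
        + ((c^2 - 1) * Real.cosh (2*s)) * (c * (Real.sinh (2*s) * 2) / (2 * Real.sqrt (c * Real.cosh (2*s) - 1)))) s :=
    (hX.const_mul _).mul hrd
  have hsq : HasDerivAt (fun s : ℝ => Real.cosh (2*s)^2)
      ((2:ℕ) * Real.cosh (2*s)^(2-1) * (Real.sinh (2*s) * 2)) s := hX.pow 2
  have hB : HasDerivAt (fun s : ℝ => c * Real.sinh (2*s) * (c^2 * Real.cosh (2*s)^2 - 1))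
      ((c * (Real.cosh (2*s) * 2)) * (c^2 * Real.cosh (2*s)^2 - 1)
        + (c * Real.sinh (2*s)) * (c^2 * ((2:ℕ) * Real.cosh (2*s)^(2-1) * (Real.sinh (2*s) * 2)))) s :=
    (hSd.const_mul c).mul ((hsq.const_mul (c^2)).sub_const 1)
  have hBne : c * Real.sinh (2*s) * (c^2 * Real.cosh (2*s)^2 - 1) ≠ 0 := by positivity
  have hd := hA.div hB hBne
  refine hd.congr_deriv ?_
  rw [eq_comm, eq_div_iff (pow_ne_zero 2 hBne)]
  linear_combination (algebra_key c (Real.cosh (2*s)) (Real.sinh (2*s))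
    (Real.sqrt (c * Real.cosh (2*s) - 1)) hr.ne' hS.ne' (by positivity) hu.ne' (by positivity)
    hq.ne' hr2 hS2).symm

lemma rpow_three_halves {u : ℝ} (hu : 0 < u) : u ^ ((3:ℝ)/2) = u * Real.sqrt u := by
  rw [show (3:ℝ)/2 = 1 + 1/2 by norm_num, Real.rpow_add hu, Real.rpow_one, ← Real.sqrt_eq_rpow]

lemma rpow_neg_half' {u : ℝ} (hu : 0 < u) : u ^ (-(1:ℝ)/2) = Real.sqrt u / u := by
  rw [show -(1:ℝ)/2 = -(1/2:ℝ) by norm_num, Real.rpow_neg hu.le, ← Real.sqrt_eq_rpow,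
    eq_div_iff hu.ne', inv_mul_eq_div, div_eq_iff (Real.sqrt_ne_zero'.2 hu)]
  exact (Real.mul_self_sqrt hu.le).symm

/-- Stability dichotomy for the minimal catenoids `𝒞_{0,a}` in `ℍ³`: `E₀(a) = ∫₀^∞ I₀(a,t) dt`
converges; if `E₀(a) ≤ 0` the variation Jacobi field `e₀(a,·)` is everywhere positive
(stable catenoid); if `E₀(a) > 0` it has exactly one zero `z(a)` in `(0,∞)` and its zero set
is `{−z(a), z(a)}` (index-one catenoid). -/
theorem stmt16 (a : ℝ) (ha : 0 < a)
    (I₀ v₀ f₀ e₀ : ℝ → ℝ)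
    (hI₀ : ∀ t, I₀ t =
      (Real.cosh (2*a) * (3 - Real.cosh (2*a) ^ 2) * Real.cosh (2*t) ^ 2
        + (Real.cosh (2*a) ^ 2 - 1) * Real.cosh (2*t) - 2 * Real.cosh (2*a))
      / ((Real.cosh (2*a) * Real.cosh (2*t) + 1) ^ 2
          * (Real.cosh (2*a) * Real.cosh (2*t) - 1) ^ ((3:ℝ)/2)))
    (hv₀ : ∀ s, v₀ s = Real.cosh (2*a) * Real.sinh (2*s)
      * (Real.cosh (2*a) * Real.cosh (2*s) - 1) ^ (-(1:ℝ)/2))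
    (hf₀ : ∀ s, f₀ s = Real.sinh (2*a) ^ 2 * Real.cosh (2*s)
      * (Real.cosh (2*a) ^ 2 * Real.cosh (2*s) ^ 2 - 1)⁻¹)
    (he₀ : ∀ s, e₀ s = f₀ s - v₀ s * ∫ t in (0:ℝ)..s, I₀ t)
    (E₀ : ℝ) (hE₀ : E₀ = ∫ t in Set.Ioi (0:ℝ), I₀ t) :
    MeasureTheory.IntegrableOn I₀ (Set.Ioi 0) ∧
    (E₀ ≤ 0 → ∀ s, 0 < e₀ s) ∧
    (0 < E₀ → ∃ z : ℝ, 0 < z ∧ e₀ z = 0 ∧ (∀ s, 0 < s → e₀ s = 0 → s = z) ∧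
      {s : ℝ | e₀ s = 0} = {-z, z}) := by
  set c : ℝ := Real.cosh (2*a) with hcdef
  have hc : 1 < c := Real.one_lt_cosh.2 (by positivity)
  have hXone : ∀ s : ℝ, 1 ≤ Real.cosh (2*s) := fun s => Real.one_le_cosh _
  have hupos : ∀ s : ℝ, 0 < c * Real.cosh (2*s) - 1 := by
    intro s; nlinarith [hXone s]
  have hqpos : ∀ s : ℝ, 0 < c^2 * Real.cosh (2*s)^2 - 1 := by
    intro s
    have h1 : 1 < c * Real.cosh (2*s) := by nlinarith [hXone s]
    nlinarith [h1, sq_nonneg (c * Real.cosh (2*s) - 1)]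
  -- sqrt forms
  have hI' : ∀ t, I₀ t =
      (c * (3 - c^2) * Real.cosh (2*t)^2 + (c^2-1) * Real.cosh (2*t) - 2*c)
      / ((c * Real.cosh (2*t) + 1)^2
          * ((c * Real.cosh (2*t) - 1) * Real.sqrt (c * Real.cosh (2*t) - 1))) := by
    intro t
    rw [hI₀ t, rpow_three_halves (hupos t)]
  have hv' : ∀ s, v₀ s = c * Real.sinh (2*s) * Real.sqrt (c * Real.cosh (2*s) - 1)
      / (c * Real.cosh (2*s) - 1) := by
    intro s
    rw [hv₀ s, rpow_neg_half' (hupos s)]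
    ring
  have hf' : ∀ s, f₀ s = (c^2 - 1) * Real.cosh (2*s) / (c^2 * Real.cosh (2*s)^2 - 1) := by
    intro s
    rw [hf₀ s, Real.sinh_sq]
    ring
  -- continuity of I₀
  have hcontc : Continuous fun t : ℝ => Real.cosh (2*t) :=
    Real.continuous_cosh.comp (continuous_const.mul continuous_id)
  have hconts : Continuous fun t : ℝ => Real.sinh (2*t) :=
    Real.continuous_sinh.comp (continuous_const.mul continuous_id)
  have hIcont : Continuous I₀ := by
    have : I₀ = fun t =>
      (c * (3 - c^2) * Real.cosh (2*t)^2 + (c^2-1) * Real.cosh (2*t) - 2*c)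
      / ((c * Real.cosh (2*t) + 1)^2
          * ((c * Real.cosh (2*t) - 1) * Real.sqrt (c * Real.cosh (2*t) - 1))) := funext hI'
    rw [this]
    apply Continuous.div
    · fun_prop
    · fun_prop
    · intro t
      have h1 := hupos t
      have h2 : 0 < Real.sqrt (c * Real.cosh (2*t) - 1) := Real.sqrt_pos.2 h1
      have h3 : 0 < c * Real.cosh (2*t) + 1 := by nlinarith [hXone t]
      exact ne_of_gt (mul_pos (pow_pos h3 2) (mul_pos h1 h2))
  -- integrability
  have hint : MeasureTheory.IntegrableOn I₀ (Set.Ioi (0:ℝ)) := by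
    have hc1 : (0:ℝ) < c - 1 := by linarith
    have hsc : (0:ℝ) < Real.sqrt (c-1) := Real.sqrt_pos.2 hc1
    have hKpos : 0 < c^2 * (c-1) * Real.sqrt (c-1) :=
      mul_pos (mul_pos (by positivity) hc1) hsc
    set M : ℝ := (c*(3+c^2) + (c^2-1) + 2*c) * 2 / (c^2 * (c-1) * Real.sqrt (c-1)) with hMdef
    have hMpos : 0 < M := div_pos (by nlinarith) hKpos
    have hbound : ∀ t ∈ Set.Ioi (0:ℝ), ‖I₀ t‖ ≤ M * Real.exp (-2 * t) := by
      intro t _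
      set X := Real.cosh (2*t) with hXdef
      have hX1 : 1 ≤ X := hXone t
      have hu := hupos t
      have hsq : 0 < Real.sqrt (c * X - 1) := Real.sqrt_pos.2 hu
      have hnum : |c * (3 - c^2) * X^2 + (c^2-1) * X - 2*c| ≤ (c*(3+c^2) + (c^2-1) + 2*c) * X^2 := by
        rw [abs_le]
        have e1 : (0:ℝ) ≤ (c^2-1) * X * (X-1) :=
          mul_nonneg (mul_nonneg (by nlinarith) (by linarith)) (by linarith)
        have e2 : (0:ℝ) ≤ (c^2-1) * X := mul_nonneg (by nlinarith) (by linarith)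
        have e3 : (0:ℝ) ≤ 2*c * (X^2-1) := mul_nonneg (by linarith) (by nlinarith)
        have e4 : (0:ℝ) < c * X^2 := mul_pos (by linarith) (by nlinarith)
        constructor <;> nlinarith [e1, e2, e3, e4, sq_nonneg X]
      have hden : c^2 * (c-1) * Real.sqrt (c-1) * X^3 ≤
          (c * X + 1)^2 * ((c * X - 1) * Real.sqrt (c * X - 1)) := by
        have h1 : Real.sqrt (c-1) ≤ Real.sqrt (c * X - 1) := Real.sqrt_le_sqrt (by nlinarith)
        have h2 : (c-1) * X ≤ c * X - 1 := by nlinarith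
        have h3 : (c*X)^2 ≤ (c*X+1)^2 := by nlinarith
        have h4 : ((c-1)*X) * Real.sqrt (c-1) ≤ (c*X-1) * Real.sqrt (c*X-1) := by
          apply mul_le_mul h2 h1 (Real.sqrt_nonneg _) (by nlinarith)
        calc c^2 * (c-1) * Real.sqrt (c-1) * X^3 = (c*X)^2 * (((c-1)*X) * Real.sqrt (c-1)) := by ring
          _ ≤ (c*X+1)^2 * (((c-1)*X) * Real.sqrt (c-1)) := by
              apply mul_le_mul_of_nonneg_right h3
              have : 0 ≤ Real.sqrt (c-1) := Real.sqrt_nonneg _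
              nlinarith
          _ ≤ (c*X+1)^2 * ((c*X-1) * Real.sqrt (c*X-1)) := by
              apply mul_le_mul_of_nonneg_left h4 (by positivity)
      have hXe : Real.exp (2*t) ≤ 2 * X := by
        rw [hXdef, Real.cosh_eq]
        have := Real.exp_pos (-(2*t))
        nlinarith
      have hstep1 : ‖I₀ t‖ ≤ M / (2 * X) := by
        have hd3 : (0:ℝ) < (c * X + 1)^2 * ((c * X - 1) * Real.sqrt (c * X - 1)) :=
          mul_pos (pow_pos (by nlinarith) 2) (mul_pos hu hsq)
        rw [hI' t, Real.norm_eq_abs, abs_div, abs_of_pos hd3]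
        calc |c * (3 - c^2) * X^2 + (c^2-1) * X - 2*c| / ((c * X + 1)^2 * ((c * X - 1) * Real.sqrt (c * X - 1)))
            ≤ ((c*(3+c^2) + (c^2-1) + 2*c) * X^2) / (c^2 * (c-1) * Real.sqrt (c-1) * X^3) := by
              have d1 : (0:ℝ) ≤ (c*(3+c^2) + (c^2-1) + 2*c) * X^2 :=
                mul_nonneg (by nlinarith) (sq_nonneg X)
              have d2 : (0:ℝ) < c^2 * (c-1) * Real.sqrt (c-1) * X^3 := by
                apply mul_pos hKpos; nlinarith
              exact div_le_div₀ d1 hnum d2 hden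
          _ = M / (2 * X) := by
              rw [hMdef]
              field_simp
      refine hstep1.trans ?_
      rw [show (-2:ℝ) * t = -(2*t) by ring, Real.exp_neg,
        div_le_iff₀ (by positivity : (0:ℝ) < 2*X), mul_assoc]
      have h5 : (1:ℝ) ≤ (Real.exp (2*t))⁻¹ * (2*X) := by
        rw [inv_mul_eq_div, le_div_iff₀ (Real.exp_pos _), one_mul]
        exact hXe
      nth_rewrite 1 [← mul_one M]
      exact mul_le_mul_of_nonneg_left h5 hMpos.le
    have hexp : MeasureTheory.IntegrableOn (fun t : ℝ => M * Real.exp (-2 * t)) (Set.Ioi 0) :=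
      (exp_neg_integrableOn_Ioi 0 (by norm_num : (0:ℝ) < 2)).const_mul M
    exact hexp.mono' hIcont.aestronglyMeasurable.restrict
      ((MeasureTheory.ae_restrict_iff' measurableSet_Ioi).2 (Filter.Eventually.of_forall hbound))
  -- FTC
  have hJd : ∀ s : ℝ, HasDerivAt (fun x => ∫ t in (0:ℝ)..x, I₀ t) (I₀ s) s := fun s =>
    (hIcont.integral_hasStrictDerivAt 0 s).hasDerivAt
  have hJcont : Continuous fun x : ℝ => ∫ t in (0:ℝ)..x, I₀ t :=
    continuous_iff_continuousAt.2 fun s => (hJd s).continuousAt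
  set hh : ℝ → ℝ := fun s => (c^2 - 1) * Real.cosh (2*s) * Real.sqrt (c * Real.cosh (2*s) - 1)
      / (c * Real.sinh (2*s) * (c^2 * Real.cosh (2*s)^2 - 1)) with hhdef
  set gg : ℝ → ℝ := fun s => hh s - ∫ t in (0:ℝ)..s, I₀ t with hgdef
  have hsinhpos : ∀ s : ℝ, 0 < s → 0 < Real.sinh (2*s) :=
    fun s hs => Real.sinh_pos_iff.2 (by linarith)
  have hcpos : (0:ℝ) < c := by linarith
  have hv₀pos : ∀ s : ℝ, 0 < s → 0 < v₀ s := by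
    intro s hs
    rw [hv' s]
    exact div_pos (mul_pos (mul_pos hcpos (hsinhpos s hs)) (Real.sqrt_pos.2 (hupos s))) (hupos s)
  have hfactor : ∀ s : ℝ, 0 < s → e₀ s = v₀ s * gg s := by
    intro s hs
    have hu := hupos s
    have hS := hsinhpos s hs
    have hq := hqpos s
    have hr2 : Real.sqrt (c * Real.cosh (2*s) - 1) * Real.sqrt (c * Real.cosh (2*s) - 1)
        = c * Real.cosh (2*s) - 1 := Real.mul_self_sqrt hu.le
    have hfv : f₀ s = v₀ s * hh s := by
      rw [hf' s, hv' s, hhdef]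
      rw [div_mul_div_comm]
      rw [show c * Real.sinh (2*s) * Real.sqrt (c * Real.cosh (2*s) - 1) *
          ((c^2 - 1) * Real.cosh (2*s) * Real.sqrt (c * Real.cosh (2*s) - 1))
          = (c^2-1) * Real.cosh (2*s) * (c * Real.sinh (2*s)) *
            (Real.sqrt (c * Real.cosh (2*s) - 1) * Real.sqrt (c * Real.cosh (2*s) - 1)) by ring,
        hr2]
      rw [div_eq_div_iff hq.ne' (by positivity)]
      ring
    rw [he₀ s, hgdef, hfv]
    ring
  have hgderiv : ∀ s : ℝ, 0 < s →
      HasDerivAt gg (-(2 * Real.sqrt (c * Real.cosh (2*s) - 1) / (c * Real.sinh (2*s)^2))) s := by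
    intro s hs
    have hd := (cat_hasDerivAt c hc s hs).sub (hJd s)
    rw [← hI' s] at hd
    have : (I₀ s - 2 * Real.sqrt (c * Real.cosh (2*s) - 1) / (c * Real.sinh (2*s)^2)) - I₀ s
        = -(2 * Real.sqrt (c * Real.cosh (2*s) - 1) / (c * Real.sinh (2*s)^2)) := by ring
    rw [this] at hd
    exact hd
  have hganti : StrictAntiOn gg (Set.Ioi 0) := by
    apply strictAntiOn_of_deriv_neg (convex_Ioi 0)
    · exact fun s hs => ((hgderiv s hs).continuousAt).continuousWithinAt
    · intro s hs
      rw [interior_Ioi] at hs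
      rw [(hgderiv s hs).deriv]
      have h1 := Real.sqrt_pos.2 (hupos s)
      have h2 := hsinhpos s hs
      have : 0 < 2 * Real.sqrt (c * Real.cosh (2*s) - 1) / (c * Real.sinh (2*s)^2) := by positivity
      linarith
  have hhpos : ∀ s : ℝ, 0 < s → 0 < hh s := by
    intro s hs
    rw [hhdef]
    have h1 := Real.sqrt_pos.2 (hupos s)
    have h2 := hsinhpos s hs
    have h3 := hqpos s
    have h4 : (0:ℝ) < c^2 - 1 := by nlinarith
    exact div_pos (mul_pos (mul_pos h4 (by nlinarith [hXone s])) h1)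
      (mul_pos (mul_pos hcpos h2) h3)
  have hhle : ∀ s : ℝ, 0 < s → hh s ≤ (Real.sinh (2*s))⁻¹ := by
    intro s hs
    have hu := hupos s
    have hS := hsinhpos s hs
    have hq := hqpos s
    have hX1 := hXone s
    have hsqle : Real.sqrt (c * Real.cosh (2*s) - 1) ≤ c * Real.cosh (2*s) := by
      have h := Real.sqrt_le_sqrt (show c * Real.cosh (2*s) - 1 ≤ (c * Real.cosh (2*s))^2 by nlinarith)
      rwa [Real.sqrt_sq (by positivity)] at h
    rw [hhdef]
    rw [inv_eq_one_div, div_le_div_iff₀ (mul_pos (mul_pos hcpos hS) hq) hS]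
    have hmul := mul_le_mul_of_nonneg_left hsqle
      (show (0:ℝ) ≤ (c^2-1) * Real.cosh (2*s) * Real.sinh (2*s) by
        apply mul_nonneg (mul_nonneg (by nlinarith) (by linarith)) (by linarith))
    nlinarith [hmul, hX1, hS, hcpos,
      mul_nonneg hS.le (show (0:ℝ) ≤ Real.cosh (2*s)^2 - 1 by nlinarith)]
  have htendsinh : Tendsto (fun s : ℝ => Real.sinh (2*s)) atTop atTop := by
    apply tendsto_atTop_mono' atTop ?_ tendsto_id
    filter_upwards [eventually_gt_atTop 0] with s hs
    have := (Real.self_lt_sinh_iff).2 (show (0:ℝ) < 2*s by linarith)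
    simp only [id_eq]
    linarith
  have hhtend : Tendsto hh atTop (𝓝 0) := by
    apply tendsto_of_tendsto_of_tendsto_of_le_of_le' tendsto_const_nhds
      (tendsto_inv_atTop_zero.comp htendsinh)
    · filter_upwards [eventually_gt_atTop 0] with s hs; exact (hhpos s hs).le
    · filter_upwards [eventually_gt_atTop 0] with s hs; exact hhle s hs
  have hJtend : Tendsto (fun x : ℝ => ∫ t in (0:ℝ)..x, I₀ t) atTop (𝓝 E₀) := by
    rw [hE₀]
    exact intervalIntegral_tendsto_integral_Ioi 0 hint tendsto_id
  have hgtend : Tendsto gg atTop (𝓝 (-E₀)) := by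
    have := hhtend.sub hJtend
    rw [zero_sub] at this
    exact this
  have he0 : e₀ 0 = 1 := by
    have hz : (2:ℝ) * 0 = 0 := by norm_num
    rw [he₀ 0, hv₀ 0, hf₀ 0, intervalIntegral.integral_same, hz, Real.sinh_zero, Real.cosh_zero,
      Real.sinh_sq]
    rw [hcdef]
    norm_num
    rw [mul_inv_cancel₀]
    nlinarith [Real.one_lt_cosh.2 (show (2:ℝ)*a ≠ 0 by positivity)]
  have heeven : ∀ s : ℝ, e₀ (-s) = e₀ s := by
    intro s
    have h1 : (∫ x in (0:ℝ)..s, I₀ (-x)) = ∫ x in (-s)..(0:ℝ), I₀ x := by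
      simpa using intervalIntegral.integral_comp_neg (a := (0:ℝ)) (b := s) I₀
    have h2 : (∫ x in (0:ℝ)..s, I₀ (-x)) = ∫ x in (0:ℝ)..s, I₀ x := by
      apply intervalIntegral.integral_congr
      intro x _
      show I₀ (-x) = I₀ x
      rw [hI₀, hI₀, show 2*(-x) = -(2*x) by ring, Real.cosh_neg]
    have hJodd : (∫ t in (0:ℝ)..(-s), I₀ t) = -∫ t in (0:ℝ)..s, I₀ t := by
      rw [intervalIntegral.integral_symm, ← h1, h2]
    rw [he₀, he₀, hJodd, hv₀ (-s), hv₀ s, hf₀ (-s), hf₀ s,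
      show 2*(-s) = -(2*s) by ring, Real.cosh_neg, Real.sinh_neg]
    ring
  have hpos : E₀ ≤ 0 → ∀ s : ℝ, 0 < s → 0 < e₀ s := by
    intro hE s hs
    have hm1 : s ∈ Set.Ioi (0:ℝ) := hs
    have hm2 : s + 1 ∈ Set.Ioi (0:ℝ) := by simp only [Set.mem_Ioi]; linarith
    have h1 : -E₀ ≤ gg (s+1) := by
      apply le_of_tendsto hgtend
      filter_upwards [eventually_ge_atTop (s+1)] with t ht
      rcases eq_or_lt_of_le ht with h|h
      · rw [← h]
      · exact (hganti hm2 (by simp only [Set.mem_Ioi]; linarith) h).le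
    have h2 : gg (s+1) < gg s := hganti hm1 hm2 (by linarith)
    have h3 : 0 < gg s := by linarith
    rw [hfactor s hs]
    exact mul_pos (hv₀pos s hs) h3
  refine ⟨hint, ?_, ?_⟩
  · intro hE s
    rcases lt_trichotomy s 0 with h|h|h
    · have := hpos hE (-s) (by linarith)
      rw [heeven s] at this
      exact this
    · rw [h, he0]; norm_num
    · exact hpos hE s h
  · intro hE
    have hev : ∀ᶠ t in atTop, gg t < 0 :=
      hgtend.eventually_lt_const (show -E₀ < 0 by linarith)
    obtain ⟨S, hS0, hSneg⟩ := ((eventually_gt_atTop 0).and hev).exists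
    have heS : e₀ S < 0 := by
      rw [hfactor S hS0]
      exact mul_neg_of_pos_of_neg (hv₀pos S hS0) hSneg
    have hf₀cont : Continuous f₀ := by
      rw [funext hf']
      exact ((continuous_const.mul hcontc)).div
        ((continuous_const.mul (hcontc.pow 2)).sub continuous_const)
        (fun s => (hqpos s).ne')
    have hv₀cont : Continuous v₀ := by
      rw [funext hv']
      exact ((continuous_const.mul hconts).mul
        (Real.continuous_sqrt.comp ((continuous_const.mul hcontc).sub continuous_const))).div
        ((continuous_const.mul hcontc).sub continuous_const)
        (fun s => (hupos s).ne')
    have hecont : Continuous e₀ := by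
      rw [funext he₀]
      exact hf₀cont.sub (hv₀cont.mul hJcont)
    have h01 : (0:ℝ) ∈ Set.Icc (e₀ S) (e₀ 0) := ⟨heS.le, by rw [he0]; norm_num⟩
    obtain ⟨z, hzmem, hz0⟩ := intermediate_value_Icc' hS0.le hecont.continuousOn h01
    have hzpos : 0 < z := by
      rcases hzmem.1.lt_or_eq with h|h
      · exact h
      · exfalso
        rw [← h, he0] at hz0
        norm_num at hz0
    have hggzero : ∀ s : ℝ, 0 < s → e₀ s = 0 → gg s = 0 := by
      intro s hs hes
      have h1 := hfactor s hs
      rw [hes] at h1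
      exact (mul_eq_zero.1 h1.symm).resolve_left (hv₀pos s hs).ne'
    have huniq : ∀ s, 0 < s → e₀ s = 0 → s = z := by
      intro s hs hes
      exact hganti.injOn hs hzpos ((hggzero s hs hes).trans (hggzero z hzpos hz0).symm)
    refine ⟨z, hzpos, hz0, huniq, ?_⟩
    ext x
    simp only [Set.mem_setOf_eq, Set.mem_insert_iff, Set.mem_singleton_iff]
    constructor
    · intro hx
      rcases lt_trichotomy x 0 with h|h|h
      · left
        have hnx : e₀ (-x) = 0 := by rw [heeven x]; exact hx
        have := huniq (-x) (by linarith) hnx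
        linarith
      · exfalso
        rw [h, he0] at hx
        norm_num at hx
      · right; exact huniq x h hx
    · intro hx
      rcases hx with rfl|rfl
      · rw [heeven z]
        exact hz0
      · exact hz0
end

section
/- For a > 0 and t > a, let λ₀(a,t) = sinh(2a)·∫_a^t (cosh τ)^{−1}·(sinh²(2τ) − sinh²(2a))^{−1/2} dτ. Then: (1) for each a > 0 the improper integral defining λ₀(a,t) converges for all t > a, and the limit V₀(a) = lim_{t→∞} λ₀(a,t) exists and is finite; (2) for 0 < a₁ < a₂, the function w(t) = λ₀(a₂,t) − λ₀(a₁,t) on [a₂, ∞) is strictly increasing, satisfies w(a₂) = −λ₀(a₁,a₂) < 0 and lim_{t→∞} w(t) = V₀(a₂) − V₀(a₁); (3) consequently w has at most one zero in (a₂, ∞), and it has a zero if and only if V₀(a₂) > V₀(a₁). -/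
open Real MeasureTheory Set Filter Topology

noncomputable def fcat (a τ : ℝ) : ℝ :=
  (Real.cosh τ)⁻¹ * (Real.sinh (2*τ) ^ 2 - Real.sinh (2*a) ^ 2) ^ (-(1:ℝ)/2)

lemma fcat_meas (a : ℝ) : Measurable (fcat a) := by
  unfold fcat
  fun_prop

lemma base_pos {a τ : ℝ} (ha : 0 < a) (hτ : a < τ) :
    0 < Real.sinh (2*τ) ^ 2 - Real.sinh (2*a) ^ 2 := by
  have h1 : Real.sinh (2*a) < Real.sinh (2*τ) := Real.sinh_lt_sinh.2 (by linarith)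
  have h2 : 0 < Real.sinh (2*a) := Real.sinh_pos_iff.2 (by linarith)
  nlinarith

lemma fcat_pos {a τ : ℝ} (ha : 0 < a) (hτ : a < τ) : 0 < fcat a τ := by
  have := base_pos ha hτ
  exact mul_pos (inv_pos.2 (Real.cosh_pos _)) (Real.rpow_pos_of_pos this _)

lemma base_lower {a τ : ℝ} (ha : 0 < a) (hτ : a < τ) :
    4 * Real.sinh (2*a) * (τ - a) ≤ Real.sinh (2*τ) ^ 2 - Real.sinh (2*a) ^ 2 := by
  have hmono := Real.sinh_sub_id_strictMono.monotone (show (2*a : ℝ) ≤ 2*τ by linarith)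
  have h1 : 2*(τ - a) ≤ Real.sinh (2*τ) - Real.sinh (2*a) := by
    linarith
  have h2 : 0 < Real.sinh (2*a) := Real.sinh_pos_iff.2 (by linarith)
  have h3 : Real.sinh (2*a) < Real.sinh (2*τ) := Real.sinh_lt_sinh.2 (by linarith)
  nlinarith

lemma fcat_integrableOn_Ioi {a : ℝ} (ha : 0 < a) : IntegrableOn (fcat a) (Ioi a) := by
  have hs : 0 < Real.sinh (2*a) := Real.sinh_pos_iff.2 (by linarith)
  have hmeas : AEStronglyMeasurable (fcat a) (volume.restrict (Ioc a (a+1))) :=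
    (fcat_meas a).aestronglyMeasurable
  -- part 1 : Ioc a (a+1)
  have h1 : IntegrableOn (fcat a) (Ioc a (a+1)) := by
    have hg : IntegrableOn (fun τ => (4 * Real.sinh (2*a))^(-(1:ℝ)/2) * (τ - a)^(-(1:ℝ)/2))
        (Ioc a (a+1)) := by
      have hbase : IntervalIntegrable (fun x : ℝ => x ^ (-(1:ℝ)/2)) volume 0 1 :=
        intervalIntegral.intervalIntegrable_rpow' (by norm_num)
      have := (hbase.comp_sub_right a)
      simp only [zero_add] at this
      have h := (intervalIntegrable_iff_integrableOn_Ioc_of_le (by linarith : a ≤ 1 + a)).1 this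
      have h' : IntegrableOn (fun x : ℝ => (x - a) ^ (-(1:ℝ)/2)) (Ioc a (a+1)) := by
        apply h.mono_set; intro x hx; exact ⟨hx.1, by linarith [hx.2]⟩
      exact h'.const_mul _
    refine Integrable.mono' hg hmeas ?_
    rw [ae_restrict_iff' measurableSet_Ioc]
    filter_upwards with τ hτ
    have hτa := hτ.1
    have hb := base_pos ha hτa
    have hlb := base_lower ha hτa
    have h4 : (0:ℝ) < 4 * Real.sinh (2*a) * (τ - a) := by nlinarith
    rw [Real.norm_eq_abs, abs_of_pos (fcat_pos ha hτa)]
    unfold fcat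
    have hc1 : (Real.cosh τ)⁻¹ ≤ 1 := by
      rw [inv_le_one_iff₀]; right; exact Real.one_le_cosh τ
    have hrp : (Real.sinh (2*τ) ^ 2 - Real.sinh (2*a) ^ 2) ^ (-(1:ℝ)/2)
        ≤ (4 * Real.sinh (2*a) * (τ - a)) ^ (-(1:ℝ)/2) :=
      Real.rpow_le_rpow_of_nonpos h4 hlb (by norm_num)
    have hsplit : (4 * Real.sinh (2*a) * (τ - a)) ^ (-(1:ℝ)/2)
        = (4 * Real.sinh (2*a))^(-(1:ℝ)/2) * (τ - a)^(-(1:ℝ)/2) := by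
      rw [Real.mul_rpow (by nlinarith) (by linarith)]
    calc (Real.cosh τ)⁻¹ * (Real.sinh (2*τ) ^ 2 - Real.sinh (2*a) ^ 2) ^ (-(1:ℝ)/2)
        ≤ 1 * (4 * Real.sinh (2*a) * (τ - a)) ^ (-(1:ℝ)/2) := by
          apply mul_le_mul hc1 hrp (Real.rpow_nonneg (le_of_lt hb) _) zero_le_one
      _ = (4 * Real.sinh (2*a))^(-(1:ℝ)/2) * (τ - a)^(-(1:ℝ)/2) := by rw [one_mul, hsplit]
  -- part 2 : Ioi (a+1)
  have h2 : IntegrableOn (fcat a) (Ioi (a+1)) := by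
    set d := Real.sinh (2*(a+1)) ^ 2 - Real.sinh (2*a) ^ 2 with hd
    have hdpos : 0 < d := base_pos ha (by linarith)
    have hg : IntegrableOn (fun τ => (2 * d^(-(1:ℝ)/2)) * Real.exp (-1 * τ)) (Ioi (a+1)) :=
      (exp_neg_integrableOn_Ioi (a+1) one_pos).const_mul _
    refine Integrable.mono' hg (fcat_meas a).aestronglyMeasurable ?_
    rw [ae_restrict_iff' measurableSet_Ioi]
    filter_upwards with τ hτ
    simp only [mem_Ioi] at hτ
    have hτa : a < τ := by linarith
    have hb := base_pos ha hτa
    rw [Real.norm_eq_abs, abs_of_pos (fcat_pos ha hτa)]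
    unfold fcat
    have hcosh : Real.exp τ / 2 ≤ Real.cosh τ := by
      rw [Real.cosh_eq]; have := Real.exp_pos (-τ); linarith
    have hc1 : (Real.cosh τ)⁻¹ ≤ 2 * Real.exp (-1*τ) := by
      rw [neg_one_mul, Real.exp_neg]
      have h2e : 0 < Real.exp τ / 2 := by positivity
      calc (Real.cosh τ)⁻¹ ≤ (Real.exp τ / 2)⁻¹ := by
            exact inv_anti₀ h2e hcosh
        _ = 2 * (Real.exp τ)⁻¹ := by field_simp
    have hdb : d ≤ Real.sinh (2*τ) ^ 2 - Real.sinh (2*a) ^ 2 := by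
      have h1 : Real.sinh (2*(a+1)) ≤ Real.sinh (2*τ) := Real.sinh_le_sinh.2 (by linarith)
      have h0 : 0 < Real.sinh (2*(a+1)) := Real.sinh_pos_iff.2 (by linarith)
      nlinarith
    have hrp : (Real.sinh (2*τ) ^ 2 - Real.sinh (2*a) ^ 2) ^ (-(1:ℝ)/2) ≤ d^(-(1:ℝ)/2) :=
      Real.rpow_le_rpow_of_nonpos hdpos hdb (by norm_num)
    calc (Real.cosh τ)⁻¹ * (Real.sinh (2*τ) ^ 2 - Real.sinh (2*a) ^ 2) ^ (-(1:ℝ)/2)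
        ≤ (2 * Real.exp (-1*τ)) * d^(-(1:ℝ)/2) := by
          apply mul_le_mul hc1 hrp (Real.rpow_nonneg hb.le _) (by positivity)
      _ = (2 * d^(-(1:ℝ)/2)) * Real.exp (-1*τ) := by ring
  have : Ioc a (a+1) ∪ Ioi (a+1) = Ioi a := Ioc_union_Ioi_eq_Ioi (by linarith)
  rw [← this]
  exact h1.union h2

lemma fcat_intervalIntegrable {a s t : ℝ} (ha : 0 < a) (hs : a ≤ s) (ht : a ≤ t) :
    IntervalIntegrable (fcat a) volume s t := by
  constructor <;>
  · apply (fcat_integrableOn_Ioi ha).mono_set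
    intro x hx
    simp only [mem_Ioc, mem_Ioi] at *
    linarith [hx.1, hx.2]

lemma fcat_mul_lt {a₁ a₂ τ : ℝ} (h1 : 0 < a₁) (h12 : a₁ < a₂) (hτ : a₂ < τ) :
    Real.sinh (2*a₁) * fcat a₁ τ < Real.sinh (2*a₂) * fcat a₂ τ := by
  have hsa1 : 0 < Real.sinh (2*a₁) := Real.sinh_pos_iff.2 (by linarith)
  have hsa12 : Real.sinh (2*a₁) < Real.sinh (2*a₂) := Real.sinh_lt_sinh.2 (by linarith)
  have hb2 : 0 < Real.sinh (2*τ) ^ 2 - Real.sinh (2*a₂) ^ 2 := base_pos (by linarith) hτ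
  have hb21 : Real.sinh (2*τ) ^ 2 - Real.sinh (2*a₂) ^ 2
      < Real.sinh (2*τ) ^ 2 - Real.sinh (2*a₁) ^ 2 := by nlinarith
  have hrp : (Real.sinh (2*τ) ^ 2 - Real.sinh (2*a₁) ^ 2) ^ (-(1:ℝ)/2)
      < (Real.sinh (2*τ) ^ 2 - Real.sinh (2*a₂) ^ 2) ^ (-(1:ℝ)/2) :=
    Real.rpow_lt_rpow_of_neg hb2 hb21 (by norm_num)
  have hrp2 : 0 < (Real.sinh (2*τ) ^ 2 - Real.sinh (2*a₁) ^ 2) ^ (-(1:ℝ)/2) :=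
    Real.rpow_pos_of_pos (by linarith) _
  have hcosh : 0 < (Real.cosh τ)⁻¹ := inv_pos.2 (Real.cosh_pos τ)
  unfold fcat
  have key : Real.sinh (2*a₁) * ((Real.sinh (2*τ) ^ 2 - Real.sinh (2*a₁) ^ 2) ^ (-(1:ℝ)/2))
      < Real.sinh (2*a₂) * ((Real.sinh (2*τ) ^ 2 - Real.sinh (2*a₂) ^ 2) ^ (-(1:ℝ)/2)) :=
    mul_lt_mul'' hsa12 hrp hsa1.le hrp2.le
  calc Real.sinh (2*a₁) * ((Real.cosh τ)⁻¹ * (Real.sinh (2*τ) ^ 2 - Real.sinh (2*a₁) ^ 2) ^ (-(1:ℝ)/2))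
      = (Real.cosh τ)⁻¹ * (Real.sinh (2*a₁) * (Real.sinh (2*τ) ^ 2 - Real.sinh (2*a₁) ^ 2) ^ (-(1:ℝ)/2)) := by ring
    _ < (Real.cosh τ)⁻¹ * (Real.sinh (2*a₂) * (Real.sinh (2*τ) ^ 2 - Real.sinh (2*a₂) ^ 2) ^ (-(1:ℝ)/2)) :=
        by exact mul_lt_mul_of_pos_left key hcosh
    _ = Real.sinh (2*a₂) * ((Real.cosh τ)⁻¹ * (Real.sinh (2*τ) ^ 2 - Real.sinh (2*a₂) ^ 2) ^ (-(1:ℝ)/2)) := by ring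

/-- Intersection of catenaries generating minimal catenoids in `ℍ³`: the integrals defining
`λ₀(a,t)` and the height `V₀(a)` converge; for `0 < a₁ < a₂` the difference
`w(t) = λ₀(a₂,t) − λ₀(a₁,t)` is strictly increasing on `[a₂,∞)`, starts at the negative
value `−λ₀(a₁,a₂)`, tends to `V₀(a₂) − V₀(a₁)`, hence has at most one zero in `(a₂,∞)`,
and has one iff `V₀(a₂) > V₀(a₁)`. -/
theorem stmt17
    (lam : ℝ → ℝ → ℝ) (V : ℝ → ℝ)
    (hlam : ∀ a t, lam a t = Real.sinh (2*a) * ∫ τ in a..t,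
      (Real.cosh τ)⁻¹ * (Real.sinh (2*τ) ^ 2 - Real.sinh (2*a) ^ 2) ^ (-(1:ℝ)/2))
    (hV : ∀ a, V a = Real.sinh (2*a) * ∫ τ in Set.Ioi a,
      (Real.cosh τ)⁻¹ * (Real.sinh (2*τ) ^ 2 - Real.sinh (2*a) ^ 2) ^ (-(1:ℝ)/2)) :
    (∀ a : ℝ, 0 < a →
      (∀ t : ℝ, a < t → MeasureTheory.IntegrableOn
        (fun τ => (Real.cosh τ)⁻¹ *
          (Real.sinh (2*τ) ^ 2 - Real.sinh (2*a) ^ 2) ^ (-(1:ℝ)/2)) (Set.Ioc a t)) ∧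
      MeasureTheory.IntegrableOn
        (fun τ => (Real.cosh τ)⁻¹ *
          (Real.sinh (2*τ) ^ 2 - Real.sinh (2*a) ^ 2) ^ (-(1:ℝ)/2)) (Set.Ioi a) ∧
      Filter.Tendsto (lam a) Filter.atTop (nhds (V a))) ∧
    (∀ a₁ a₂ : ℝ, 0 < a₁ → a₁ < a₂ →
      StrictMonoOn (fun t => lam a₂ t - lam a₁ t) (Set.Ici a₂) ∧
      lam a₂ a₂ - lam a₁ a₂ = -lam a₁ a₂ ∧ 0 < lam a₁ a₂ ∧
      Filter.Tendsto (fun t => lam a₂ t - lam a₁ t) Filter.atTop (nhds (V a₂ - V a₁)) ∧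
      (∀ t₁ ∈ Set.Ioi a₂, ∀ t₂ ∈ Set.Ioi a₂,
        lam a₂ t₁ - lam a₁ t₁ = 0 → lam a₂ t₂ - lam a₁ t₂ = 0 → t₁ = t₂) ∧
      ((∃ t ∈ Set.Ioi a₂, lam a₂ t - lam a₁ t = 0) ↔ V a₁ < V a₂)) := by
  have hl : ∀ a t, lam a t = Real.sinh (2*a) * ∫ τ in a..t, fcat a τ := hlam
  have hVf : ∀ a, V a = Real.sinh (2*a) * ∫ τ in Set.Ioi a, fcat a τ := hV
  -- convergence of lam at top
  have htend : ∀ a : ℝ, 0 < a → Filter.Tendsto (lam a) Filter.atTop (nhds (V a)) := by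
    intro a ha
    have hfun : lam a = fun t => Real.sinh (2*a) * ∫ τ in a..t, fcat a τ :=
      funext fun t => hl a t
    rw [hfun, hVf a]
    exact (MeasureTheory.intervalIntegral_tendsto_integral_Ioi a
      (fcat_integrableOn_Ioi ha) tendsto_id).const_mul _
  refine ⟨fun a ha => ⟨fun t _ => (fcat_integrableOn_Ioi ha).mono_set Ioc_subset_Ioi_self,
    fcat_integrableOn_Ioi ha, htend a ha⟩, ?_⟩
  intro a₁ a₂ h1 h12
  have h2 : 0 < a₂ := lt_trans h1 h12
  -- difference formula
  have hdiff : ∀ s t : ℝ, a₂ ≤ s → s ≤ t →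
      (lam a₂ t - lam a₁ t) - (lam a₂ s - lam a₁ s)
        = ∫ τ in s..t, (Real.sinh (2*a₂) * fcat a₂ τ - Real.sinh (2*a₁) * fcat a₁ τ) := by
    intro s t hs hst
    have ii2t : IntervalIntegrable (fcat a₂) volume a₂ t := fcat_intervalIntegrable h2 le_rfl (by linarith)
    have ii2s : IntervalIntegrable (fcat a₂) volume a₂ s := fcat_intervalIntegrable h2 le_rfl hs
    have ii1t : IntervalIntegrable (fcat a₁) volume a₁ t := fcat_intervalIntegrable h1 le_rfl (by linarith)
    have ii1s : IntervalIntegrable (fcat a₁) volume a₁ s := fcat_intervalIntegrable h1 le_rfl (by linarith)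
    have ii2 : IntervalIntegrable (fcat a₂) volume s t := fcat_intervalIntegrable h2 (by linarith) (by linarith)
    have ii1 : IntervalIntegrable (fcat a₁) volume s t := fcat_intervalIntegrable h1 (by linarith) (by linarith)
    rw [intervalIntegral.integral_sub (ii2.const_mul _) (ii1.const_mul _),
      intervalIntegral.integral_const_mul, intervalIntegral.integral_const_mul,
      hl a₂ t, hl a₂ s, hl a₁ t, hl a₁ s,
      ← intervalIntegral.integral_interval_sub_left ii2t ii2s,
      ← intervalIntegral.integral_interval_sub_left ii1t ii1s]
    ring
  have hmono : StrictMonoOn (fun t => lam a₂ t - lam a₁ t) (Set.Ici a₂) := by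
    intro s hs t ht hst
    simp only [mem_Ici] at hs ht
    have key : 0 < ∫ τ in s..t,
        (Real.sinh (2*a₂) * fcat a₂ τ - Real.sinh (2*a₁) * fcat a₁ τ) := by
      apply intervalIntegral.intervalIntegral_pos_of_pos_on
      · exact ((fcat_intervalIntegrable h2 (by linarith) (by linarith)).const_mul _).sub
          ((fcat_intervalIntegrable h1 (by linarith) (by linarith)).const_mul _)
      · intro x hx
        exact sub_pos.2 (fcat_mul_lt h1 h12 (lt_of_le_of_lt hs hx.1))
      · exact hst
    have := hdiff s t hs (le_of_lt hst)
    simp only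
    linarith
  have hstart : lam a₂ a₂ - lam a₁ a₂ = -lam a₁ a₂ := by
    rw [hl a₂ a₂, intervalIntegral.integral_same, mul_zero]; ring
  have hpos : 0 < lam a₁ a₂ := by
    rw [hl a₁ a₂]
    refine mul_pos (Real.sinh_pos_iff.2 (by linarith)) ?_
    apply intervalIntegral.intervalIntegral_pos_of_pos_on
      (fcat_intervalIntegrable h1 le_rfl (le_of_lt h12))
    · exact fun x hx => fcat_pos h1 hx.1
    · exact h12
  have htendw : Filter.Tendsto (fun t => lam a₂ t - lam a₁ t) Filter.atTop
      (nhds (V a₂ - V a₁)) := (htend a₂ h2).sub (htend a₁ h1)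
  have hinj : ∀ t₁ ∈ Set.Ioi a₂, ∀ t₂ ∈ Set.Ioi a₂,
      lam a₂ t₁ - lam a₁ t₁ = 0 → lam a₂ t₂ - lam a₁ t₂ = 0 → t₁ = t₂ := by
    intro t₁ ht₁ t₂ ht₂ hz₁ hz₂
    exact hmono.injOn (mem_Ici.2 (le_of_lt ht₁)) (mem_Ici.2 (le_of_lt ht₂)) (show lam a₂ t₁ - lam a₁ t₁ = lam a₂ t₂ - lam a₁ t₂ by rw [hz₁, hz₂])
  refine ⟨hmono, hstart, hpos, htendw, hinj, ?_⟩
  constructor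
  · rintro ⟨t, ht, hz⟩
    simp only [mem_Ioi] at ht
    have h1' : lam a₂ t - lam a₁ t < lam a₂ (t+1) - lam a₁ (t+1) :=
      hmono (le_of_lt ht) (by simp only [mem_Ici]; linarith) (by linarith)
    have hle : V a₂ - V a₁ ≥ lam a₂ (t+1) - lam a₁ (t+1) := by
      apply ge_of_tendsto htendw
      filter_upwards [eventually_ge_atTop (t+1)] with s hs
      rcases eq_or_lt_of_le hs with h | h
      · rw [← h]
      · exact le_of_lt (hmono (by simp only [mem_Ici]; linarith)
          (by simp only [mem_Ici]; linarith) h)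
    rw [hz] at h1'
    linarith
  · intro hVlt
    have hev : ∀ᶠ t in Filter.atTop, 0 < lam a₂ t - lam a₁ t :=
      htendw.eventually (eventually_gt_nhds (by linarith))
    obtain ⟨t₀, ht₀, hwt₀⟩ := ((eventually_ge_atTop (a₂+1)).and hev).exists
    have ht₀2 : a₂ < t₀ := by linarith
    -- continuity on Icc a₂ t₀
    have hcont : ∀ a : ℝ, 0 < a → a ≤ a₂ → ContinuousOn (fun t => lam a t) (Icc a₂ t₀) := by
      intro a ha haa
      have hii : IntervalIntegrable (fcat a) volume a t₀ :=
        fcat_intervalIntegrable ha le_rfl (by linarith)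
      have hc : ContinuousOn (fun t => ∫ τ in a..t, fcat a τ) (Set.uIcc a t₀) :=
        intervalIntegral.continuousOn_primitive_interval' hii left_mem_uIcc
      rw [Set.uIcc_of_le (by linarith)] at hc
      have hc' : ContinuousOn (fun t => ∫ τ in a..t, fcat a τ) (Icc a₂ t₀) :=
        hc.mono (Icc_subset_Icc_left (by linarith))
      have : (fun t => lam a t) = fun t => Real.sinh (2*a) * ∫ τ in a..t, fcat a τ :=
        funext fun t => hl a t
      rw [this]
      exact continuousOn_const.mul hc'
    have hwcont : ContinuousOn (fun t => lam a₂ t - lam a₁ t) (Icc a₂ t₀) :=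
      (hcont a₂ h2 le_rfl).sub (hcont a₁ h1 (le_of_lt h12))
    have hivt := intermediate_value_Ioo (le_of_lt ht₀2) hwcont
    have h0mem : (0:ℝ) ∈ Ioo (lam a₂ a₂ - lam a₁ a₂) (lam a₂ t₀ - lam a₁ t₀) := by
      constructor
      · rw [hstart]; linarith
      · exact hwt₀
    obtain ⟨t, htmem, htz⟩ := hivt h0mem
    exact ⟨t, htmem.1, htz⟩
end

section
/- For a > 0, define for s ∈ ℝ: y₁(a,s) = a + ∫₀^s 2e^{−2a}·t·((2e^{−2a}·t² + cosh(2a))² − 1)^{−1/2} dt and Λ₁(a,s) = ∫₀^s e^{a}·(2t² + e^{2a}·sinh(2a)) / (2·(t² + e^{2a}·cosh²(a))·(t² + e^{2a}·sinh²(a))^{1/2}) dt. Then: (1) y₁(a,·) is a smooth even function of s satisfying cosh(2·y₁(a,s)) = 2e^{−2a}·s² + cosh(2a) for all s ∈ ℝ; (2) Λ₁(a,·) is a smooth odd function of s; (3) the function v₁(a,s) := cosh(y₁(a,s))·∂y₁/∂s(a,s) is odd and equals e^{−a}·s·(s² + e^{2a}·sinh²(a))^{−1/2}, with v₁(a,0)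 = 0 and v₁(a,s) → e^{−a} as s → ∞. -/
open Real MeasureTheory Set Filter Topology

lemma aux_sqrtA (A : ℝ) (hA : 0 < A) : ContDiff ℝ (⊤:ℕ∞) (fun t : ℝ => Real.sqrt (t^2+A)) := by
  rw [contDiff_iff_contDiffAt]
  intro t
  have h1 : ContDiff ℝ (⊤:ℕ∞) (fun t : ℝ => t^2 + A) := by fun_prop
  exact (Real.contDiffAt_sqrt (by positivity : t^2 + A ≠ 0)).comp t h1.contDiffAt

lemma aux_hasDeriv_sqrtA (A : ℝ) (hA : 0 < A) (s : ℝ) :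
    HasDerivAt (fun t : ℝ => Real.sqrt (t^2+A)) (s / Real.sqrt (s^2+A)) s := by
  have h1 : HasDerivAt (fun t : ℝ => t^2 + A) (2*s) s := by
    simpa using ((hasDerivAt_pow 2 s).add_const A)
  have h2 := (Real.hasDerivAt_sqrt (by positivity : s^2 + A ≠ 0)).comp s h1
  refine h2.congr_deriv ?_
  field_simp

lemma aux_tendsto (A c : ℝ) (hA : 0 < A) :
    Tendsto (fun s : ℝ => c * s / Real.sqrt (s^2+A)) atTop (nhds c) := by
  have h0 : Tendsto (fun s : ℝ => A / s^2) atTop (nhds 0) := by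
    apply Tendsto.div_atTop tendsto_const_nhds
    exact tendsto_pow_atTop two_ne_zero
  have h1 : Tendsto (fun s : ℝ => c / Real.sqrt (1 + A / s^2)) atTop (nhds c) := by
    have : ContinuousAt (fun x : ℝ => c / Real.sqrt (1 + x)) 0 := by
      apply ContinuousAt.div continuousAt_const
      · exact (Real.continuous_sqrt.comp (by fun_prop)).continuousAt
      · simp
    have := this.tendsto.comp h0
    simpa [Function.comp_def] using this
  apply h1.congr'
  filter_upwards [eventually_gt_atTop 0] with s hs
  have hsq : Real.sqrt (s^2+A) = s * Real.sqrt (1 + A/s^2) := by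
    rw [show s^2 + A = s^2 * (1 + A/s^2) by field_simp, Real.sqrt_mul (by positivity),
      Real.sqrt_sq hs.le]
  rw [hsq]
  have h2 : Real.sqrt (1 + A/s^2) > 0 := Real.sqrt_pos.2 (by positivity)
  field_simp

/-- Arc-length parametrization of the embedded catenary cousins in `ℍ³`: `y₁(a,·)` is smooth
even with `cosh(2y₁(a,s)) = 2e^{−2a}s² + cosh(2a)`, `Λ₁(a,·)` is smooth odd, and the
vertical Jacobi field `v₁(a,s) = cosh(y₁)·∂_s y₁` is odd, equal to
`e^{−a} s (s² + e^{2a} sinh²a)^{−1/2}`, vanishes at `0` and tends to `e^{−a}` at infinity. -/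
theorem stmt18 (a : ℝ) (ha : 0 < a)
    (y₁ Λ₁ v₁ : ℝ → ℝ)
    (hy : ∀ s, y₁ s = a + ∫ t in (0:ℝ)..s,
      2 * Real.exp (-2*a) * t *
        ((2 * Real.exp (-2*a) * t ^ 2 + Real.cosh (2*a)) ^ 2 - 1) ^ (-(1:ℝ)/2))
    (hΛ : ∀ s, Λ₁ s = ∫ t in (0:ℝ)..s,
      Real.exp a * (2 * t ^ 2 + Real.exp (2*a) * Real.sinh (2*a))
        / (2 * (t ^ 2 + Real.exp (2*a) * Real.cosh a ^ 2)
            * Real.sqrt (t ^ 2 + Real.exp (2*a) * Real.sinh a ^ 2)))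
    (hv : ∀ s, v₁ s = Real.cosh (y₁ s) * deriv y₁ s) :
    (ContDiff ℝ (⊤ : ℕ∞) y₁ ∧ (∀ s, y₁ (-s) = y₁ s) ∧
      ∀ s, Real.cosh (2 * y₁ s) = 2 * Real.exp (-2*a) * s ^ 2 + Real.cosh (2*a)) ∧
    (ContDiff ℝ (⊤ : ℕ∞) Λ₁ ∧ ∀ s, Λ₁ (-s) = -Λ₁ s) ∧
    ((∀ s, v₁ (-s) = -v₁ s) ∧
      (∀ s, v₁ s = Real.exp (-a) * s /
        Real.sqrt (s ^ 2 + Real.exp (2*a) * Real.sinh a ^ 2)) ∧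
      v₁ 0 = 0 ∧
      Filter.Tendsto v₁ Filter.atTop (nhds (Real.exp (-a)))) := by
  have hsinh : 0 < Real.sinh a := Real.sinh_pos_iff.2 ha
  have hcosh : 0 < Real.cosh a := Real.cosh_pos a
  set A := Real.exp (2*a) * Real.sinh a ^ 2 with hAdef
  set B := Real.exp (2*a) * Real.cosh a ^ 2 with hBdef
  have hA : 0 < A := mul_pos (Real.exp_pos _) (pow_pos hsinh 2)
  have hB : 0 < B := mul_pos (Real.exp_pos _) (pow_pos hcosh 2)
  have hBA : B = A + Real.exp (2*a) := by
    rw [hAdef, hBdef]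
    linear_combination Real.exp (2*a) * (Real.cosh_sq_sub_sinh_sq a)
  have hexp2 : Real.exp (-a) ^ 2 * Real.exp (2*a) = 1 := by
    rw [show Real.exp (-a) ^ 2 = Real.exp (-a) * Real.exp (-a) by ring, ← Real.exp_add,
      ← Real.exp_add, show -a + -a + 2*a = 0 by ring, Real.exp_zero]
  set Y : ℝ → ℝ := fun s => Real.arsinh (Real.exp (-a) * Real.sqrt (s^2 + A)) with hYdef
  set fS : ℝ → ℝ := fun s => s / (Real.sqrt (s^2+A) * Real.sqrt (s^2+B)) with hfSdef
  have hone : ∀ s : ℝ, 1 + (Real.exp (-a) * Real.sqrt (s^2+A))^2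
      = Real.exp (-a)^2 * (s^2+B) := by
    intro s
    rw [mul_pow, Real.sq_sqrt (by positivity)]
    rw [hBA]
    linear_combination -hexp2
  have hsqrt1 : ∀ s : ℝ, Real.sqrt (1 + (Real.exp (-a) * Real.sqrt (s^2+A))^2)
      = Real.exp (-a) * Real.sqrt (s^2+B) := by
    intro s
    rw [hone s, Real.sqrt_mul (sq_nonneg _), Real.sqrt_sq (Real.exp_pos _).le]
  have hYderiv : ∀ s, HasDerivAt Y (fS s) s := by
    intro s
    have h2 : HasDerivAt (fun s : ℝ => Real.exp (-a) * Real.sqrt (s^2+A))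
        (Real.exp (-a) * (s / Real.sqrt (s^2+A))) s :=
      (aux_hasDeriv_sqrtA A hA s).const_mul _
    have h3 := (Real.hasDerivAt_arsinh (Real.exp (-a) * Real.sqrt (s^2+A))).comp s h2
    refine h3.congr_deriv ?_
    rw [hsqrt1 s]
    have h4 : 0 < Real.sqrt (s^2+A) := Real.sqrt_pos.2 (by positivity)
    have h5 : 0 < Real.sqrt (s^2+B) := Real.sqrt_pos.2 (by positivity)
    rw [hfSdef]
    field_simp
  have hY0 : Y 0 = a := by
    rw [hYdef]
    simp only
    have hA' : (0:ℝ)^2 + A = (Real.exp a * Real.sinh a)^2 := by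
      rw [hAdef, mul_pow, show Real.exp a ^ 2 = Real.exp (2*a) by
        rw [show Real.exp a ^ 2 = Real.exp a * Real.exp a by ring, ← Real.exp_add]; ring_nf]
      ring
    rw [hA', Real.sqrt_sq (by positivity), ← mul_assoc, ← Real.exp_add]
    simp [Real.arsinh_sinh]
  have hcont_fS : Continuous fS := by
    rw [hfSdef]
    apply Continuous.div continuous_id
    · exact (Real.continuous_sqrt.comp (by fun_prop)).mul
        (Real.continuous_sqrt.comp (by fun_prop))
    · intro s
      have h4 : 0 < Real.sqrt (s^2+A) := Real.sqrt_pos.2 (by positivity)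
      have h5 : 0 < Real.sqrt (s^2+B) := Real.sqrt_pos.2 (by positivity)
      positivity
  have hfI : (fun t => 2 * Real.exp (-2*a) * t *
      ((2 * Real.exp (-2*a) * t ^ 2 + Real.cosh (2*a)) ^ 2 - 1) ^ (-(1:ℝ)/2)) = fS := by
    funext t
    have key : (2 * Real.exp (-2*a) * t ^ 2 + Real.cosh (2*a)) ^ 2 - 1
        = (2 * Real.exp (-2*a))^2 * ((t^2 + A) * (t^2 + B)) := by
      rw [hAdef, hBdef]
      have h1 : Real.cosh a ^ 2 - Real.sinh a ^ 2 = 1 := Real.cosh_sq_sub_sinh_sq a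
      have h2 : Real.exp (-2*a) * Real.exp (2*a) = 1 := by
        rw [← Real.exp_add]; norm_num
      have h3 : Real.cosh (2*a) = Real.cosh a ^ 2 + Real.sinh a ^ 2 := Real.cosh_two_mul a
      rw [h3]
      linear_combination (Real.cosh a^2 - Real.sinh a^2 + 1) * h1 +
        (-(4*Real.exp (-2*a)*t^2*(Real.cosh a^2+Real.sinh a^2)) -
          4*Real.cosh a^2*Real.sinh a^2*(Real.exp (-2*a)*Real.exp (2*a)+1)) * h2
    have hEpos : (0:ℝ) < 2 * Real.exp (-2*a) := by positivity
    have hpos : (0:ℝ) < (2 * Real.exp (-2*a))^2 * ((t^2 + A) * (t^2 + B)) := by positivity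
    rw [key, show -(1:ℝ)/2 = -(1/2) by norm_num, Real.rpow_neg hpos.le,
      ← Real.sqrt_eq_rpow, Real.sqrt_mul (sq_nonneg _), Real.sqrt_sq hEpos.le,
      Real.sqrt_mul (by positivity)]
    have h4 : 0 < Real.sqrt (t^2+A) := Real.sqrt_pos.2 (by positivity)
    have h5 : 0 < Real.sqrt (t^2+B) := Real.sqrt_pos.2 (by positivity)
    rw [hfSdef]
    field_simp
  have hyY : y₁ = Y := by
    funext s
    rw [hy s, hfI,
      intervalIntegral.integral_eq_sub_of_hasDerivAt (fun t _ => hYderiv t)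
        (hcont_fS.intervalIntegrable 0 s), hY0]
    ring
  have hYsmooth : ContDiff ℝ (⊤:ℕ∞) Y := by
    rw [hYdef]
    exact Real.contDiff_arsinh.comp (contDiff_const.mul (aux_sqrtA A hA))
  have hcosh2Y : ∀ s, Real.cosh (2 * Y s) = 2 * Real.exp (-2*a) * s ^ 2 + Real.cosh (2*a) := by
    intro s
    rw [hYdef]
    simp only
    rw [Real.cosh_two_mul, Real.cosh_arsinh, Real.sinh_arsinh,
      Real.sq_sqrt (by positivity : (0:ℝ) ≤ 1 + (Real.exp (-a) * Real.sqrt (s^2+A))^2),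
      mul_pow, Real.sq_sqrt (by positivity : (0:ℝ) ≤ s^2 + A)]
    have h2 : Real.exp (-2*a) = Real.exp (-a) ^ 2 := by
      rw [show Real.exp (-a) ^ 2 = Real.exp (-a) * Real.exp (-a) by ring, ← Real.exp_add]
      ring_nf
    rw [h2, Real.cosh_two_mul a, hAdef]
    linear_combination 2*Real.sinh a^2*hexp2 - Real.cosh_sq_sub_sinh_sq a
  -- Λ part
  set g : ℝ → ℝ := fun t => Real.exp a * (2 * t ^ 2 + Real.exp (2*a) * Real.sinh (2*a))
        / (2 * (t ^ 2 + B) * Real.sqrt (t ^ 2 + A)) with hgdef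
  have hgne : ∀ t : ℝ, 2 * (t ^ 2 + B) * Real.sqrt (t ^ 2 + A) ≠ 0 := by
    intro t
    have h4 : 0 < Real.sqrt (t^2+A) := Real.sqrt_pos.2 (by positivity)
    positivity
  have hgcont : Continuous g := by
    rw [hgdef]
    exact Continuous.div (by fun_prop)
      ((by fun_prop : Continuous fun t : ℝ => 2 * (t^2 + B)).mul
        (Real.continuous_sqrt.comp (by fun_prop))) hgne
  have hgsmooth : ContDiff ℝ (⊤:ℕ∞) g := by
    rw [hgdef]
    exact ContDiff.div (by fun_prop)
      ((by fun_prop : ContDiff ℝ (⊤:ℕ∞) fun t : ℝ => 2 * (t^2 + B)).mul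
        (aux_sqrtA A hA)) hgne
  have hΛY : Λ₁ = fun s => ∫ t in (0:ℝ)..s, g t := funext hΛ
  have hΛderiv : ∀ s, HasDerivAt Λ₁ (g s) s := by
    intro s
    rw [hΛY]
    exact intervalIntegral.integral_hasDerivAt_right (hgcont.intervalIntegrable 0 s)
      (hgcont.stronglyMeasurable.stronglyMeasurableAtFilter) hgcont.continuousAt
  have hgeven : ∀ t, g (-t) = g t := by
    intro t
    rw [hgdef]
    simp only
    rw [show (-t:ℝ)^2 = t^2 by ring]
  have hΛodd : ∀ s, Λ₁ (-s) = -Λ₁ s := by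
    intro s
    rw [hΛY]
    simp only
    have h := intervalIntegral.integral_comp_neg g (a := 0) (b := s)
    simp only [neg_zero] at h
    simp_rw [hgeven] at h
    rw [intervalIntegral.integral_symm, ← h]
  -- v part
  have hderivy : deriv y₁ = fS := by
    rw [hyY]
    funext s
    exact (hYderiv s).deriv
  have hv₁ : ∀ s, v₁ s = Real.exp (-a) * s / Real.sqrt (s^2+A) := by
    intro s
    rw [hv s, hderivy, hyY, hYdef]
    simp only
    rw [Real.cosh_arsinh, hsqrt1 s, hfSdef]
    simp only
    have h4 : 0 < Real.sqrt (s^2+A) := Real.sqrt_pos.2 (by positivity)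
    have h5 : 0 < Real.sqrt (s^2+B) := Real.sqrt_pos.2 (by positivity)
    field_simp
  refine ⟨⟨by rw [hyY]; exact hYsmooth, ?_, fun s => by rw [hyY]; exact hcosh2Y s⟩,
    ⟨?_, hΛodd⟩, ?_, hv₁, ?_, ?_⟩
  · intro s
    rw [hyY, hYdef]
    simp only
    rw [show (-s:ℝ)^2 = s^2 by ring]
  · refine contDiff_infty_iff_deriv.2 ⟨fun s => (hΛderiv s).differentiableAt, ?_⟩
    have : deriv Λ₁ = g := funext fun s => (hΛderiv s).deriv
    rw [this]
    exact hgsmooth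
  · intro s
    rw [hv₁ (-s), hv₁ s, show (-s:ℝ)^2 = s^2 by ring]
    ring
  · rw [hv₁ 0]; simp
  · have hveq : v₁ = fun s => Real.exp (-a) * s / Real.sqrt (s^2+A) := funext hv₁
    rw [hveq]
    exact aux_tendsto A (Real.exp (-a)) hA
end
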